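/- arXiv:math/0509327 — 5 statements merged into one kernel-verified Lean document; each statement's English description precedes it below -/
import Mathlib

section
/- Let A : H1 → H2 be (S,T)-complementable. Then there exist projections P ∈ L(H1) and Q ∈ L(H2) with R(P*) = S, R(Q) = T, and Q A = A P = A/(S,T). -/
open ContinuousLinearMap Submodule

noncomputable def projC {H : Type*} [NormedAddCommGroup H] [InnerProductSpace ℂ H]
    [CompleteSpace H] (S : Submodule ℂ H) [CompleteSpace S] : H →L[ℂ] H :=
  S.subtypeL ∘L orthogonalProjection S

variable {H₁ H₂ : Type*} [NormedAddCommGroup H₁] [InnerProductSpace ℂ H₁] [CompleteSpace H₁]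
  [NormedAddCommGroup H₂] [InnerProductSpace ℂ H₂] [CompleteSpace H₂]

noncomputable def blk11 (S : Submodule ℂ H₁) [CompleteSpace S]
    (T : Submodule ℂ H₂) [CompleteSpace T] (A : H₁ →L[ℂ] H₂) : H₁ →L[ℂ] H₂ :=
  projC T ∘L A ∘L projC S

noncomputable def blk12 (S : Submodule ℂ H₁) [CompleteSpace S]
    (T : Submodule ℂ H₂) [CompleteSpace T] (A : H₁ →L[ℂ] H₂) : H₁ →L[ℂ] H₂ :=
  projC T ∘L A ∘L (1 - projC S)

noncomputable def blk21 (S : Submodule ℂ H₁) [CompleteSpace S]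
    (T : Submodule ℂ H₂) [CompleteSpace T] (A : H₁ →L[ℂ] H₂) : H₁ →L[ℂ] H₂ :=
  (1 - projC T) ∘L A ∘L projC S

noncomputable def blk22 (S : Submodule ℂ H₁) [CompleteSpace S]
    (T : Submodule ℂ H₂) [CompleteSpace T] (A : H₁ →L[ℂ] H₂) : H₁ →L[ℂ] H₂ :=
  (1 - projC T) ∘L A ∘L (1 - projC S)

/-- `As` is the bilateral shorted operator `A/(S,T)`: there are `Bh = |A22|^(1/2)`,
`Dh = |A22*|^(1/2)` (unique positive fourth roots of `A22* A22` resp. `A22 A22*`),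
`U` the partial isometry of the polar decomposition of `A22`, and `E`, `F` the reduced
Douglas solutions of `A21 = |A22*|^(1/2) U X` and `A12* = |A22|^(1/2) X`, with
`As = A11 - F* E`. -/
def IsShorted (S : Submodule ℂ H₁) [CompleteSpace S] (T : Submodule ℂ H₂) [CompleteSpace T]
    (A As : H₁ →L[ℂ] H₂) : Prop :=
  ∃ (Bh : H₁ →L[ℂ] H₁) (Dh : H₂ →L[ℂ] H₂) (U : H₁ →L[ℂ] H₂) (E : H₁ →L[ℂ] H₁)
      (F : H₂ →L[ℂ] H₁),
    Bh.IsPositive ∧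
    Bh ∘L Bh ∘L Bh ∘L Bh = adjoint (blk22 S T A) ∘L blk22 S T A ∧
    Dh.IsPositive ∧
    Dh ∘L Dh ∘L Dh ∘L Dh = blk22 S T A ∘L adjoint (blk22 S T A) ∧
    blk22 S T A = U ∘L (Bh ∘L Bh) ∧
    (∀ x, blk22 S T A x = 0 → U x = 0) ∧
    (Dh ∘L U) ∘L E = blk21 S T A ∧
    LinearMap.range (E : H₁ →ₗ[ℂ] H₁) ≤ (LinearMap.ker (Dh ∘L U : H₁ →ₗ[ℂ] H₂))ᗮ ∧
    Bh ∘L F = adjoint (blk12 S T A) ∧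
    LinearMap.range (F : H₂ →ₗ[ℂ] H₁) ≤ (LinearMap.ker (Bh : H₁ →ₗ[ℂ] H₁))ᗮ ∧
    As = blk11 S T A - adjoint F ∘L E

/-- `A` is `(S,T)`-complementable. -/
def IsComplementable (S : Submodule ℂ H₁) [CompleteSpace S] (T : Submodule ℂ H₂)
    [CompleteSpace T] (A : H₁ →L[ℂ] H₂) : Prop :=
  LinearMap.range (blk21 S T A : H₁ →ₗ[ℂ] H₂) ≤ LinearMap.range (blk22 S T A : H₁ →ₗ[ℂ] H₂) ∧
  LinearMap.range (adjoint (blk12 S T A) : H₂ →ₗ[ℂ] H₁) ≤ LinearMap.range (adjoint (blk22 S T A) : H₂ →ₗ[ℂ] H₁)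


set_option maxHeartbeats 2000000
set_option synthInstance.maxHeartbeats 1000000
set_option linter.unusedSectionVars false

local notation "⟪" x ", " y "⟫" => @inner ℂ _ _ x y

section Helpers
variable {E' F' : Type*} [NormedAddCommGroup E'] [InnerProductSpace ℂ E'] [CompleteSpace E']
  [NormedAddCommGroup F'] [InnerProductSpace ℂ F'] [CompleteSpace F']

theorem sqrt_uniq' (C D : E' →L[ℂ] E') (hC : C.IsPositive) (hD : D.IsPositive)
    (h : C ∘L C = D ∘L D) : C = D := by
  have h1 : CFC.sqrt (C*C) = C := CFC.sqrt_unique rfl ((nonneg_iff_isPositive C).2 hC)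
  have h2 : CFC.sqrt (D*D) = D := CFC.sqrt_unique rfl ((nonneg_iff_isPositive D).2 hD)
  rw [← h1, ← h2, show (C*C : E' →L[ℂ] E') = D*D from h]

theorem mem_orth_self_zero {K : Submodule ℂ E'} {x : E'} (h1 : x ∈ K) (h2 : x ∈ Kᗮ) : x = 0 := by
  have := (Submodule.mem_orthogonal K x).1 h2 x h1
  simpa [inner_self_eq_zero] using this

theorem adj_comp_zero (A : E' →L[ℂ] F') (x : E') (h : adjoint A (A x) = 0) : A x = 0 := by
  have : ⟪A x, A x⟫ = 0 := by
    rw [← ContinuousLinearMap.adjoint_inner_left, h, inner_zero_left]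
  simpa [inner_self_eq_zero] using this

theorem sa_sq_zero (C : E' →L[ℂ] E') (hC : IsSelfAdjoint C) (x : E') (h : C (C x) = 0) :
    C x = 0 := by
  have h1 := ContinuousLinearMap.adjoint_inner_left C x (C x)
  rw [hC.adjoint_eq, h, inner_zero_left] at h1
  exact inner_self_eq_zero.1 h1.symm

/-- Douglas' lemma with reduced solution. -/
theorem douglas (B C : E' →L[ℂ] F') (h : LinearMap.range (B : E' →ₗ[ℂ] F') ≤ LinearMap.range (C : E' →ₗ[ℂ] F')) :
    ∃ Y : E' →L[ℂ] E', C ∘L Y = B ∧ LinearMap.range (Y : E' →ₗ[ℂ] E') ≤ (LinearMap.ker (C : E' →ₗ[ℂ] F'))ᗮ := by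
  classical
  set K := (LinearMap.ker (C : E' →ₗ[ℂ] F'))ᗮ with hKdef
  haveI : CompleteSpace (LinearMap.ker (C : E' →ₗ[ℂ] F')) := (isClosed_ker C).completeSpace_coe
  have horth : Kᗮ = LinearMap.ker (C : E' →ₗ[ℂ] F') := Submodule.orthogonal_orthogonal _
  have uniq : ∀ v w : E', v ∈ K → w ∈ K → C v = C w → v = w := by
    intro v w hv hw hvw
    have h1 : v - w ∈ LinearMap.ker (C : E' →ₗ[ℂ] F') := by
      simp [LinearMap.mem_ker, map_sub, hvw]
    have h2 : v - w ∈ Kᗮ := horth ▸ h1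
    exact sub_eq_zero.1 (mem_orth_self_zero (sub_mem hv hw) h2)
  have exv : ∀ x : E', ∃ v, v ∈ K ∧ C v = B x := by
    intro x
    obtain ⟨u, hu⟩ := h (LinearMap.mem_range_self (B : E' →ₗ[ℂ] F') x)
    refine ⟨orthogonalProjection K u, Submodule.coe_mem _, ?_⟩
    have hmem : u - orthogonalProjection K u ∈ Kᗮ :=
      sub_starProjection_mem_orthogonal u
    rw [horth, LinearMap.mem_ker, map_sub, sub_eq_zero] at hmem
    exact hmem.symm.trans hu
  choose f hf1 hf2 using exv
  have fadd : ∀ x y, f (x + y) = f x + f y := fun x y =>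
    uniq _ _ (hf1 _) (add_mem (hf1 x) (hf1 y))
      (by rw [hf2, map_add, map_add, hf2, hf2])
  have fsmul : ∀ (c : ℂ) (x), f (c • x) = c • f x := fun c x =>
    uniq _ _ (hf1 _) (Submodule.smul_mem _ _ (hf1 x))
      (by rw [hf2, map_smul, map_smul, hf2])
  let g : E' →ₗ[ℂ] E' :=
    { toFun := f, map_add' := fadd, map_smul' := fsmul }
  have hcont : ∀ (u : ℕ → E') (x y), Filter.Tendsto u Filter.atTop (nhds x) →
      Filter.Tendsto (g ∘ u) Filter.atTop (nhds y) → y = g x := by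
    intro u x y hux hgy
    have h1 : Filter.Tendsto (fun n => C (g (u n))) Filter.atTop (nhds (C y)) :=
      (C.continuous.tendsto y).comp hgy
    have h2 : Filter.Tendsto (fun n => B (u n)) Filter.atTop (nhds (B x)) :=
      (B.continuous.tendsto x).comp hux
    have heq : (fun n => C (g (u n))) = fun n => B (u n) := funext fun n => hf2 (u n)
    rw [heq] at h1
    have hCy : C y = B x := tendsto_nhds_unique h1 h2
    have hyK : y ∈ K := by
      refine (Submodule.isClosed_orthogonal _).mem_of_tendsto hgy ?_
      exact Filter.Eventually.of_forall fun n => hf1 (u n)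
    exact uniq y (g x) hyK (hf1 x) (by rw [hCy]; exact (hf2 x).symm)
  refine ⟨ContinuousLinearMap.ofSeqClosedGraph hcont, ?_, ?_⟩
  · ext x
    exact hf2 x
  · rintro _ ⟨x, rfl⟩
    exact hf1 x

end Helpers

theorem shorted_eq_QA_eq_AP
    (S : Submodule ℂ H₁) [CompleteSpace S] (T : Submodule ℂ H₂) [CompleteSpace T]
    (A As : H₁ →L[ℂ] H₂) (hc : IsComplementable S T A) (hAs : IsShorted S T A As) :
    ∃ (P : H₁ →L[ℂ] H₁) (Q : H₂ →L[ℂ] H₂),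
      IsIdempotentElem P ∧ IsIdempotentElem Q ∧
      LinearMap.range (adjoint P : H₁ →ₗ[ℂ] H₁) = S ∧ LinearMap.range (Q : H₂ →ₗ[ℂ] H₂) = T ∧
      Q ∘L A = As ∧ A ∘L P = As := by
  classical
  obtain ⟨hc1, hc2⟩ := hc
  obtain ⟨Bh, Dh, U, Eo, Fo, hBh, hBh4, hDh, hDh4, hpolar, hU0, hEo, hErange, hFo, hFrange,
    hAsEq⟩ := hAs
  -- basic projection facts
  have hPs2 : ∀ x : H₁, projC S (projC S x) = projC S x := fun x => by
    simp [projC, orthogonalProjection_mem_subspace_eq_self, Submodule.starProjection_eq_self_iff]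
  have hPt2 : ∀ y : H₂, projC T (projC T y) = projC T y := fun y => by
    simp [projC, orthogonalProjection_mem_subspace_eq_self, Submodule.starProjection_eq_self_iff]
  have hPsmem : ∀ x : H₁, projC S x ∈ S := fun x => by
    simp [projC]
  have hPtmem : ∀ y : H₂, projC T y ∈ T := fun y => by
    simp [projC]
  have hPsid : ∀ x ∈ S, projC S x = x := fun x hx => by
    simpa [projC] using Submodule.starProjection_eq_self_iff.2 hx
  have hPtid : ∀ y ∈ T, projC T y = y := fun y hy => by
    simpa [projC] using Submodule.starProjection_eq_self_iff.2 hy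
  have hPsorth : ∀ x ∈ Sᗮ, projC S x = 0 := fun x hx => by
    simp [projC, Submodule.orthogonalProjectionOnto_apply_of_mem_orthogonal hx]
  have hPtorth : ∀ y ∈ Tᗮ, projC T y = 0 := fun y hy => by
    simp [projC, Submodule.orthogonalProjectionOnto_apply_of_mem_orthogonal hy]
  have hPsadj : adjoint (projC S) = projC S := (isSelfAdjoint_starProjection S).adjoint_eq
  have hPtadj : adjoint (projC T) = projC T := (isSelfAdjoint_starProjection T).adjoint_eq
  have hBhadj : adjoint Bh = Bh := hBh.isSelfAdjoint.adjoint_eq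
  have hDhadj : adjoint Dh = Dh := hDh.isSelfAdjoint.adjoint_eq
  have hPtmv : ∀ (a b : H₂), ⟪projC T a, b⟫ = ⟪a, projC T b⟫ := fun a b => by
    conv_lhs => rw [← hPtadj]
    rw [ContinuousLinearMap.adjoint_inner_left]
  have hBhmv : ∀ (a b : H₁), ⟪Bh a, b⟫ = ⟪a, Bh b⟫ := fun a b => by
    conv_lhs => rw [← hBhadj]
    rw [ContinuousLinearMap.adjoint_inner_left]
  have hDhmv : ∀ (a b : H₂), ⟪Dh a, b⟫ = ⟪a, Dh b⟫ := fun a b => by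
    conv_lhs => rw [← hDhadj]
    rw [ContinuousLinearMap.adjoint_inner_left]
  -- block facts
  have hA22Ps : ∀ x, blk22 S T A (projC S x) = 0 := fun x => by
    simp [blk22, hPs2]
  have hA12Ps : ∀ x, blk12 S T A (projC S x) = 0 := fun x => by
    simp [blk12, hPs2]
  have hA21Ps : ∀ x, blk21 S T A (projC S x) = blk21 S T A x := fun x => by
    simp [blk21, hPs2]
  have hPtA12 : ∀ x, projC T (blk12 S T A x) = blk12 S T A x := fun x => by
    simp [blk12, hPt2]
  -- pointwise of operator equalities
  have hBh4' : ∀ x, Bh (Bh (Bh (Bh x))) = adjoint (blk22 S T A) (blk22 S T A x) := fun x => by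
    have := ContinuousLinearMap.ext_iff.1 hBh4 x
    simpa using this
  have hDh4' : ∀ y, Dh (Dh (Dh (Dh y))) = blk22 S T A (adjoint (blk22 S T A) y) := fun y => by
    have := ContinuousLinearMap.ext_iff.1 hDh4 y
    simpa using this
  have hpolar' : ∀ x, blk22 S T A x = U (Bh (Bh x)) := fun x => by
    have := ContinuousLinearMap.ext_iff.1 hpolar x
    simpa using this
  have hEo' : ∀ x, Dh (U (Eo x)) = blk21 S T A x := fun x => by
    have := ContinuousLinearMap.ext_iff.1 hEo x
    simpa using this
  have hFo' : ∀ y, Bh (Fo y) = adjoint (blk12 S T A) y := fun y => by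
    have := ContinuousLinearMap.ext_iff.1 hFo y
    simpa using this
  -- kernels
  have hkerBA : ∀ x, Bh x = 0 ↔ blk22 S T A x = 0 := by
    intro x
    constructor
    · intro hx
      apply adj_comp_zero (blk22 S T A) x
      rw [← hBh4' x, hx, map_zero, map_zero, map_zero]
    · intro hx
      have h4 : Bh (Bh (Bh (Bh x))) = 0 := by
        rw [hBh4' x, hx, map_zero]
      have h2 : Bh (Bh x) = 0 := by
        have := sa_sq_zero (Bh ∘L Bh) (by rw [IsSelfAdjoint, star_eq_adjoint, adjoint_comp, hBhadj]) x (by simpa using h4)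
        simpa using this
      exact sa_sq_zero Bh hBh.isSelfAdjoint x h2
  have hU0' : ∀ x, Bh x = 0 → U x = 0 := fun x h => hU0 x ((hkerBA x).1 h)
  haveI : CompleteSpace (LinearMap.ker (Bh : H₁ →ₗ[ℂ] H₁)) := (isClosed_ker Bh).completeSpace_coe
  have hMorth : (LinearMap.ker (Bh : H₁ →ₗ[ℂ] H₁))ᗮᗮ = LinearMap.ker (Bh : H₁ →ₗ[ℂ] H₁) := Submodule.orthogonal_orthogonal _
  have hBhM : ∀ x, Bh x ∈ (LinearMap.ker (Bh : H₁ →ₗ[ℂ] H₁))ᗮ := by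
    intro x
    rw [Submodule.mem_orthogonal]
    intro u hu
    rw [LinearMap.mem_ker, ContinuousLinearMap.coe_coe] at hu
    rw [← hBhmv, hu, inner_zero_left]
  have hM_sub : ∀ v ∈ (LinearMap.ker (Bh : H₁ →ₗ[ℂ] H₁))ᗮ,
      v ∈ closure ((LinearMap.range (Bh ∘L Bh : H₁ →ₗ[ℂ] H₁) : Submodule ℂ H₁) : Set H₁) := by
    intro v hv
    have hle : (LinearMap.ker (Bh : H₁ →ₗ[ℂ] H₁))ᗮ ≤ (LinearMap.range (Bh ∘L Bh : H₁ →ₗ[ℂ] H₁)).topologicalClosure := by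
      rw [← Submodule.orthogonal_orthogonal_eq_closure]
      apply Submodule.orthogonal_le
      intro z hz
      rw [Submodule.mem_orthogonal] at hz
      have h0 : ⟪Bh (Bh z), z⟫ = 0 := by
        have := hz _ (LinearMap.mem_range_self (Bh ∘L Bh : H₁ →ₗ[ℂ] H₁) z)
        simpa using this
      have h1 : ⟪Bh z, Bh z⟫ = 0 := (hBhmv (Bh z) z).symm.trans h0
      exact LinearMap.mem_ker.2 (inner_self_eq_zero.1 h1)
    have hmem := hle hv
    rwa [← Submodule.topologicalClosure_coe]
  -- U is isometric on the closure of the range of Bh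
  have hnorm0 : ∀ x, ‖U (Bh (Bh x))‖ = ‖Bh (Bh x)‖ := by
    intro x
    have h2 : ⟪Bh (Bh x), Bh (Bh x)⟫ = ⟪U (Bh (Bh x)), U (Bh (Bh x))⟫ := by
      calc ⟪Bh (Bh x), Bh (Bh x)⟫ = ⟪Bh x, Bh (Bh (Bh x))⟫ := hBhmv _ _
        _ = ⟪x, Bh (Bh (Bh (Bh x)))⟫ := hBhmv _ _
        _ = ⟪x, adjoint (blk22 S T A) (blk22 S T A x)⟫ := by rw [hBh4' x]
        _ = ⟪blk22 S T A x, blk22 S T A x⟫ :=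
            ContinuousLinearMap.adjoint_inner_right _ _ _
        _ = ⟪U (Bh (Bh x)), U (Bh (Bh x))⟫ := by rw [← hpolar' x]
    have := congrArg (fun z : ℂ => RCLike.re (K := ℂ) z) h2
    rw [inner_self_eq_norm_sq (𝕜 := ℂ), inner_self_eq_norm_sq (𝕜 := ℂ)] at this
    nlinarith [norm_nonneg (U (Bh (Bh x))), norm_nonneg (Bh (Bh x))]
  have hisoM : ∀ v ∈ (LinearMap.ker (Bh : H₁ →ₗ[ℂ] H₁))ᗮ, ‖U v‖ = ‖v‖ := by
    intro v hv
    have hcl : IsClosed {w : H₁ | ‖U w‖ = ‖w‖} := isClosed_eq U.continuous.norm continuous_norm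
    have hsub : ((LinearMap.range (Bh ∘L Bh : H₁ →ₗ[ℂ] H₁) : Submodule ℂ H₁) : Set H₁) ⊆
        {w | ‖U w‖ = ‖w‖} := by
      rintro _ ⟨x, rfl⟩
      simpa using hnorm0 x
    exact closure_minimal hsub hcl (hM_sub v hv)
  have hinnerM : ∀ v w, v ∈ (LinearMap.ker (Bh : H₁ →ₗ[ℂ] H₁))ᗮ → w ∈ (LinearMap.ker (Bh : H₁ →ₗ[ℂ] H₁))ᗮ →
      ⟪U v, U w⟫ = ⟪v, w⟫ := by
    intro v w hv hw
    have key := (LinearMap.norm_map_iff_inner_map_map (𝕜 := ℂ)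
      (U.toLinearMap.comp ((LinearMap.ker (Bh : H₁ →ₗ[ℂ] H₁))ᗮ).subtype)).1
      (fun m => by simpa using hisoM m m.2) ⟨v, hv⟩ ⟨w, hw⟩
    simpa using key
  have hUadjU : ∀ x, adjoint U (U (Bh x)) = Bh x := by
    intro x
    refine ext_inner_right ℂ fun y => ?_
    rw [ContinuousLinearMap.adjoint_inner_left]
    have hy2 : y - orthogonalProjection (LinearMap.ker (Bh : H₁ →ₗ[ℂ] H₁))ᗮ y ∈ LinearMap.ker (Bh : H₁ →ₗ[ℂ] H₁) :=
      hMorth.le (sub_starProjection_mem_orthogonal y)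
    have hUy2 : U (y - orthogonalProjection (LinearMap.ker (Bh : H₁ →ₗ[ℂ] H₁))ᗮ y) = 0 :=
      hU0' _ (LinearMap.mem_ker.1 hy2)
    have hysplit : U y = U (orthogonalProjection (LinearMap.ker (Bh : H₁ →ₗ[ℂ] H₁))ᗮ y) +
        U (y - orthogonalProjection (LinearMap.ker (Bh : H₁ →ₗ[ℂ] H₁))ᗮ y) := by
      rw [← map_add, add_sub_cancel]
    rw [hysplit, hUy2, add_zero, hinnerM _ _ (hBhM x) (Submodule.coe_mem _)]
    have horthy : ⟪Bh x, y - orthogonalProjection (LinearMap.ker (Bh : H₁ →ₗ[ℂ] H₁))ᗮ y⟫ = 0 :=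
      (Submodule.mem_orthogonal _ _).1 (sub_starProjection_mem_orthogonal y) _ (hBhM x)
    rw [inner_sub_right, sub_eq_zero] at horthy
    exact horthy.symm
  -- intertwining Dh U Bh = U Bh²
  have hA22adj : ∀ w, adjoint (blk22 S T A) w = Bh (Bh (adjoint U w)) := by
    intro w
    rw [hpolar, adjoint_comp, adjoint_comp, hBhadj]
    simp
  have hBh2pos : (Bh ∘L Bh).IsPositive := by
    have h := (isPositive_one (E := H₁)).conj_adjoint Bh
    simpa [hBhadj, ContinuousLinearMap.one_def] using h
  have hDh2pos : (Dh ∘L Dh).IsPositive := by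
    have h := (isPositive_one (E := H₂)).conj_adjoint Dh
    simpa [hDhadj, ContinuousLinearMap.one_def] using h
  have hDc2pos : (U ∘L ((Bh ∘L Bh) ∘L adjoint U)).IsPositive := by
    have h := hBh2pos.conj_adjoint U
    simpa [ContinuousLinearMap.comp_assoc] using h
  have hDcsq : (U ∘L ((Bh ∘L Bh) ∘L adjoint U)) ∘L (U ∘L ((Bh ∘L Bh) ∘L adjoint U)) =
      (Dh ∘L Dh) ∘L (Dh ∘L Dh) := by
    ext y
    simp only [ContinuousLinearMap.comp_apply]
    rw [hUadjU (Bh (adjoint U y))]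
    have hr : Dh (Dh (Dh (Dh y))) = blk22 S T A (adjoint (blk22 S T A) y) := hDh4' y
    rw [hr, hA22adj y, hpolar' (Bh (Bh (adjoint U y)))]
  have hDc : U ∘L ((Bh ∘L Bh) ∘L adjoint U) = Dh ∘L Dh :=
    sqrt_uniq' _ _ hDc2pos hDh2pos hDcsq
  have hDc1pos : (U ∘L (Bh ∘L adjoint U)).IsPositive := by
    have h := hBh.conj_adjoint U
    simpa [ContinuousLinearMap.comp_assoc] using h
  have hDc1sq : (U ∘L (Bh ∘L adjoint U)) ∘L (U ∘L (Bh ∘L adjoint U)) = Dh ∘L Dh := by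
    rw [← hDc]
    ext y
    simp only [ContinuousLinearMap.comp_apply]
    rw [hUadjU (adjoint U y)]
  have hDc1 : U ∘L (Bh ∘L adjoint U) = Dh := sqrt_uniq' _ _ hDc1pos hDh hDc1sq
  have hint : ∀ x, Dh (U (Bh x)) = U (Bh (Bh x)) := by
    intro x
    conv_lhs => rw [← hDc1]
    simp only [ContinuousLinearMap.comp_apply]
    rw [hUadjU x]
  -- Douglas reduced solutions
  obtain ⟨Y, hY, hYrange⟩ := douglas (blk21 S T A) (blk22 S T A) hc1
  obtain ⟨Z, hZ, hZrange⟩ := douglas (adjoint (blk12 S T A)) (adjoint (blk22 S T A)) hc2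
  have hY' : ∀ x, blk22 S T A (Y x) = blk21 S T A x := fun x => by
    have := ContinuousLinearMap.ext_iff.1 hY x
    simpa using this
  have hZ' : ∀ y, adjoint (blk22 S T A) (Z y) = adjoint (blk12 S T A) y := fun y => by
    have := ContinuousLinearMap.ext_iff.1 hZ y
    simpa using this
  -- Bh ∘ Y is the reduced solution Eo
  have hBhN : ∀ x, Bh x ∈ (LinearMap.ker (Dh ∘L U : H₁ →ₗ[ℂ] H₂))ᗮ := by
    intro x
    rw [Submodule.mem_orthogonal]
    intro z hz
    have hz' : Dh (U z) = 0 := by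
      have := LinearMap.mem_ker.1 hz
      simpa using this
    have h1 : ⟪Bh x, z⟫ = ⟪U (Bh x), U z⟫ := by
      conv_lhs => rw [← hUadjU x]
      rw [ContinuousLinearMap.adjoint_inner_left]
    have h2 : ⟪U (Bh x), U z⟫ = 0 := by
      have hcl : IsClosed {w : H₁ | ⟪U w, U z⟫ = 0} :=
        isClosed_eq (Continuous.inner (U.continuous) continuous_const) continuous_const
      have hsub : ((LinearMap.range (Bh ∘L Bh : H₁ →ₗ[ℂ] H₁) : Submodule ℂ H₁) : Set H₁) ⊆
          {w | ⟪U w, U z⟫ = 0} := by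
        rintro _ ⟨u, rfl⟩
        show ⟪U ((Bh ∘L Bh) u), U z⟫ = 0
        have hrw : U ((Bh ∘L Bh) u) = Dh (U (Bh u)) := by
          simp only [ContinuousLinearMap.comp_apply]
          rw [hint u]
        rw [hrw, hDhmv, hz', inner_zero_right]
      exact closure_minimal hsub hcl (hM_sub _ (hBhM x))
    rw [← inner_conj_symm, h1, h2, map_zero]
  have hEY : ∀ x, Bh (Y x) = Eo x := by
    intro x
    have hNboth : Bh (Y x) - Eo x ∈ (LinearMap.ker (Dh ∘L U : H₁ →ₗ[ℂ] H₂))ᗮ :=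
      sub_mem (hBhN (Y x)) (hErange (LinearMap.mem_range_self (Eo : H₁ →ₗ[ℂ] H₁) x))
    have hNker : Bh (Y x) - Eo x ∈ LinearMap.ker (Dh ∘L U : H₁ →ₗ[ℂ] H₂) := by
      rw [LinearMap.mem_ker]
      show (Dh ∘L U) (Bh (Y x) - Eo x) = 0
      simp only [ContinuousLinearMap.comp_apply, map_sub]
      rw [hint (Y x), ← hpolar' (Y x), hY' x, hEo' x, sub_self]
    exact sub_eq_zero.1 (mem_orth_self_zero hNker hNboth)
  -- Fo is U† Dh Z
  have hUDmem : ∀ w, adjoint U w ∈ (LinearMap.ker (Bh : H₁ →ₗ[ℂ] H₁))ᗮ := by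
    intro w
    rw [Submodule.mem_orthogonal]
    intro k hk
    have hUk : U k = 0 := hU0' _ (LinearMap.mem_ker.1 hk)
    rw [← inner_conj_symm, ContinuousLinearMap.adjoint_inner_left, hUk, inner_zero_right,
      map_zero]
  have hFZ : ∀ y, Fo y = adjoint U (Dh (Z y)) := by
    intro y
    have hBhUD : Bh (adjoint U (Dh (Z y))) = Bh (Bh (adjoint U (Z y))) := by
      refine ext_inner_right ℂ fun v => ?_
      calc ⟪Bh (adjoint U (Dh (Z y))), v⟫
          = ⟪adjoint U (Dh (Z y)), Bh v⟫ := hBhmv _ _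
        _ = ⟪Dh (Z y), U (Bh v)⟫ := ContinuousLinearMap.adjoint_inner_left U _ _
        _ = ⟪Z y, Dh (U (Bh v))⟫ := hDhmv _ _
        _ = ⟪Z y, U (Bh (Bh v))⟫ := by rw [hint v]
        _ = ⟪adjoint U (Z y), Bh (Bh v)⟫ :=
            (ContinuousLinearMap.adjoint_inner_left U _ _).symm
        _ = ⟪Bh (adjoint U (Z y)), Bh v⟫ := (hBhmv _ _).symm
        _ = ⟪Bh (Bh (adjoint U (Z y))), v⟫ := (hBhmv _ _).symm
    have hb : Fo y - adjoint U (Dh (Z y)) ∈ LinearMap.ker (Bh : H₁ →ₗ[ℂ] H₁) := by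
      rw [LinearMap.mem_ker, ContinuousLinearMap.coe_coe, map_sub, hBhUD, hFo' y, ← hA22adj (Z y), hZ' y, sub_self]
    have hmem : Fo y - adjoint U (Dh (Z y)) ∈ (LinearMap.ker (Bh : H₁ →ₗ[ℂ] H₁))ᗮ :=
      sub_mem (hFrange (LinearMap.mem_range_self (Fo : H₂ →ₗ[ℂ] H₁) y)) (hUDmem _)
    exact sub_eq_zero.1 (mem_orth_self_zero hb hmem)
  -- supports of Y and Z
  have hYPs : ∀ x, Y (projC S x) = Y x := by
    intro x
    have h0 : Y (projC S x - x) ∈ LinearMap.ker (blk22 S T A : H₁ →ₗ[ℂ] H₂) := by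
      rw [LinearMap.mem_ker, ContinuousLinearMap.coe_coe, hY', map_sub, hA21Ps, sub_self]
    have h1 : Y (projC S x - x) ∈ (LinearMap.ker (blk22 S T A : H₁ →ₗ[ℂ] H₂))ᗮ :=
      hYrange (LinearMap.mem_range_self (Y : H₁ →ₗ[ℂ] H₁) _)
    have := mem_orth_self_zero h0 h1
    rw [map_sub, sub_eq_zero] at this
    exact this
  have hSker : S ≤ LinearMap.ker (blk22 S T A : H₁ →ₗ[ℂ] H₂) := by
    intro s hs
    rw [LinearMap.mem_ker]
    have := hA22Ps s
    rwa [hPsid s hs] at this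
  have hPsY : ∀ x, projC S (Y x) = 0 := fun x =>
    hPsorth _ ((Submodule.orthogonal_le hSker) (hYrange (LinearMap.mem_range_self (Y : H₁ →ₗ[ℂ] H₁) x)))
  have hA12adjPt : ∀ y, adjoint (blk12 S T A) (projC T y) = adjoint (blk12 S T A) y := by
    intro y
    refine ext_inner_right ℂ fun v => ?_
    rw [ContinuousLinearMap.adjoint_inner_left, ContinuousLinearMap.adjoint_inner_left,
      hPtmv, hPtA12]
  have hZPt : ∀ y, Z (projC T y) = Z y := by
    intro y
    have h0 : Z (projC T y - y) ∈ LinearMap.ker (adjoint (blk22 S T A) : H₂ →ₗ[ℂ] H₁) := by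
      rw [LinearMap.mem_ker, ContinuousLinearMap.coe_coe, hZ', map_sub, hA12adjPt, sub_self]
    have h1 : Z (projC T y - y) ∈ (LinearMap.ker (adjoint (blk22 S T A) : H₂ →ₗ[ℂ] H₁))ᗮ :=
      hZrange (LinearMap.mem_range_self (Z : H₂ →ₗ[ℂ] H₂) _)
    have := mem_orth_self_zero h0 h1
    rw [map_sub, sub_eq_zero] at this
    exact this
  have hTker : T ≤ LinearMap.ker (adjoint (blk22 S T A) : H₂ →ₗ[ℂ] H₁) := by
    intro t ht
    rw [LinearMap.mem_ker, ContinuousLinearMap.coe_coe]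
    refine ext_inner_right ℂ fun v => ?_
    rw [ContinuousLinearMap.adjoint_inner_left, inner_zero_left]
    have hblk : blk22 S T A v = A ((1 - projC S) v) - projC T (A ((1 - projC S) v)) := by
      simp only [blk22, ContinuousLinearMap.comp_apply, ContinuousLinearMap.sub_apply,
        ContinuousLinearMap.one_apply, map_sub]
      abel
    rw [hblk, inner_sub_right, ← hPtmv, hPtid t ht, sub_self]
  have hPtZ : ∀ y, projC T (Z y) = 0 := fun y =>
    hPtorth _ ((Submodule.orthogonal_le hTker) (hZrange (LinearMap.mem_range_self (Z : H₂ →ₗ[ℂ] H₂) y)))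
  -- the adjoint of Z
  have hZs1 : ∀ y, projC T (adjoint Z y) = adjoint Z y := by
    intro y
    have hop : Z ∘L projC T = Z := ContinuousLinearMap.ext fun w => by
      simpa using hZPt w
    have := congrArg adjoint hop
    rw [adjoint_comp, hPtadj] at this
    exact ContinuousLinearMap.ext_iff.1 this y
  have hZs2 : ∀ y, adjoint Z (projC T y) = 0 := by
    intro y
    have hop : projC T ∘L Z = 0 := ContinuousLinearMap.ext fun w => by
      simpa using hPtZ w
    have := congrArg adjoint hop
    rw [adjoint_comp, hPtadj, map_zero] at this
    exact ContinuousLinearMap.ext_iff.1 this y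
  have hYY : ∀ x, Y (Y x) = 0 := fun x => by
    rw [← hYPs (Y x), hPsY, map_zero]
  have hZsZs : ∀ y, adjoint Z (adjoint Z y) = 0 := fun y => by
    rw [← hZs1 y, hZs2]
  have hYs1 : ∀ x, projC S (adjoint Y x) = adjoint Y x := by
    intro x
    have hop : Y ∘L projC S = Y := ContinuousLinearMap.ext fun w => by
      simpa using hYPs w
    have := congrArg adjoint hop
    rw [adjoint_comp, hPsadj] at this
    exact ContinuousLinearMap.ext_iff.1 this x
  have hYs2 : ∀ x, adjoint Y (projC S x) = 0 := by
    intro x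
    have hop : projC S ∘L Y = 0 := ContinuousLinearMap.ext fun w => by
      simpa using hPsY w
    have := congrArg adjoint hop
    rw [adjoint_comp, hPsadj, map_zero] at this
    exact ContinuousLinearMap.ext_iff.1 this x
  -- the projections
  refine ⟨projC S - Y, projC T - adjoint Z, ?_, ?_, ?_, ?_, ?_, ?_⟩
  · -- P idempotent
    show (projC S - Y) * (projC S - Y) = projC S - Y
    ext x
    simp only [ContinuousLinearMap.mul_apply, ContinuousLinearMap.sub_apply, map_sub]
    rw [hPs2, hPsY, hYPs, hYY]
    abel
  · -- Q idempotent
    show (projC T - adjoint Z) * (projC T - adjoint Z) = projC T - adjoint Z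
    ext y
    simp only [ContinuousLinearMap.mul_apply, ContinuousLinearMap.sub_apply, map_sub]
    rw [hPt2, hZs1, hZs2, hZsZs]
    abel
  · -- range P† = S
    have hPadj : adjoint (projC S - Y) = projC S - adjoint Y := by
      rw [map_sub, hPsadj]
    apply le_antisymm
    · rintro _ ⟨w, rfl⟩
      rw [hPadj]
      simp only [ContinuousLinearMap.coe_coe, ContinuousLinearMap.sub_apply]
      exact sub_mem (hPsmem w) (by rw [← hYs1 w]; exact hPsmem _)
    · intro s hs
      refine ⟨s, ?_⟩
      rw [hPadj]
      simp only [ContinuousLinearMap.coe_coe, ContinuousLinearMap.sub_apply]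
      rw [hPsid s hs, ← hPsid s hs, hYs2, hPsid s hs, sub_zero]
  · -- range Q = T
    apply le_antisymm
    · rintro _ ⟨w, rfl⟩
      simp only [ContinuousLinearMap.coe_coe, ContinuousLinearMap.sub_apply]
      exact sub_mem (hPtmem w) (by rw [← hZs1 w]; exact hPtmem _)
    · intro t ht
      refine ⟨t, ?_⟩
      simp only [ContinuousLinearMap.coe_coe, ContinuousLinearMap.sub_apply]
      rw [hPtid t ht, ← hPtid t ht, hZs2, hPtid t ht, sub_zero]
  · -- Q A = As
    have hPtA : ∀ x, projC T (A x) = blk11 S T A x + blk12 S T A x := by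
      intro x
      simp only [blk11, blk12, ContinuousLinearMap.comp_apply, ContinuousLinearMap.sub_apply,
        ContinuousLinearMap.one_apply, map_sub]
      abel
    have hZsA : ∀ x, adjoint Z (A x) = adjoint Fo (Eo x) + blk12 S T A x := by
      intro x
      have hsplit : blk21 S T A x + blk22 S T A x = A x - projC T (A x) := by
        simp only [blk21, blk22, ContinuousLinearMap.comp_apply, ContinuousLinearMap.sub_apply,
          ContinuousLinearMap.one_apply, map_sub]
        abel
      have h1 : adjoint Z (A x) =
          adjoint Z (blk21 S T A x) + adjoint Z (blk22 S T A x) := by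
        rw [← map_add, hsplit, map_sub, hZs2, sub_zero]
      have h2 : adjoint Z (blk22 S T A x) = blk12 S T A x := by
        have hop : adjoint Z ∘L blk22 S T A = blk12 S T A := by
          have := congrArg adjoint hZ
          rwa [adjoint_comp, adjoint_adjoint, adjoint_adjoint] at this
        have := ContinuousLinearMap.ext_iff.1 hop x
        simpa using this
      have h3 : adjoint Z (blk21 S T A x) = adjoint Fo (Eo x) := by
        have hFadj : adjoint Fo (Eo x) = adjoint Z (Dh (U (Eo x))) := by
          have hFop : Fo = (adjoint U) ∘L (Dh ∘L Z) := ContinuousLinearMap.ext fun w => by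
            simpa using hFZ w
          rw [hFop, adjoint_comp, adjoint_comp, adjoint_adjoint, hDhadj]
          simp
        rw [hFadj, hEo' x]
      rw [h1, h2, h3]
    ext x
    simp only [ContinuousLinearMap.comp_apply, ContinuousLinearMap.sub_apply]
    rw [hAsEq, hPtA, hZsA]
    simp only [ContinuousLinearMap.sub_apply, ContinuousLinearMap.comp_apply]
    abel
  · -- A P = As
    have hAPs : ∀ x, A (projC S x) = blk11 S T A x + blk21 S T A x := by
      intro x
      simp only [blk11, blk21, ContinuousLinearMap.comp_apply, ContinuousLinearMap.sub_apply,
        ContinuousLinearMap.one_apply]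
      abel
    have hAY : ∀ x, A (Y x) = adjoint Fo (Eo x) + blk21 S T A x := by
      intro x
      have h1 : blk22 S T A (Y x) = A (Y x) - projC T (A (Y x)) := by
        simp only [blk22, ContinuousLinearMap.comp_apply, ContinuousLinearMap.sub_apply,
          ContinuousLinearMap.one_apply, hPsY x, map_sub, sub_zero]
      have h2 : blk12 S T A (Y x) = projC T (A (Y x)) := by
        simp only [blk12, ContinuousLinearMap.comp_apply, ContinuousLinearMap.sub_apply,
          ContinuousLinearMap.one_apply, hPsY x, map_sub, sub_zero]
      have h4 : blk12 S T A (Y x) = adjoint Fo (Eo x) := by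
        have hop : adjoint Fo ∘L Bh = blk12 S T A := by
          have := congrArg adjoint hFo
          rwa [adjoint_comp, adjoint_adjoint, hBhadj] at this
        have h5 := ContinuousLinearMap.ext_iff.1 hop (Y x)
        simp only [ContinuousLinearMap.comp_apply] at h5
        rw [← h5, hEY x]
      calc A (Y x) = projC T (A (Y x)) + (A (Y x) - projC T (A (Y x))) := by abel
        _ = blk12 S T A (Y x) + blk22 S T A (Y x) := by rw [h1, h2]
        _ = adjoint Fo (Eo x) + blk21 S T A x := by rw [hY' x, h4]
    ext x
    simp only [ContinuousLinearMap.comp_apply, ContinuousLinearMap.sub_apply, map_sub]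
    rw [hAsEq, hAPs, hAY]
    simp only [ContinuousLinearMap.sub_apply, ContinuousLinearMap.comp_apply]
    abel
end

section
/- Let A, B : H1 → H2 be bounded operators between Hilbert spaces. The following are equivalent: (1) the Dixmier angle cosine c₀(closure(R(A)), closure(R(B−A))) < 1; (2) there exists a projection Q ∈ L(H2) with R(Q) = closure(R(A)) and A = Q B; (3) there exists a projection Q ∈ L(H2) with A = Q B. -/
open ContinuousLinearMap Submodule

noncomputable def dixmierAngle {H : Type*} [NormedAddCommGroup H] [InnerProductSpace ℂ H]
    (M N : Submodule ℂ H) : ℝ :=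
  sSup {r : ℝ | ∃ x ∈ M, ∃ y ∈ N, ‖x‖ = 1 ∧ ‖y‖ = 1 ∧ r = ‖(inner ℂ x y : ℂ)‖}

section Aux

variable {H : Type*} [NormedAddCommGroup H] [InnerProductSpace ℂ H] [CompleteSpace H]

lemma dixmier_bddAbove (M N : Submodule ℂ H) :
    BddAbove {r : ℝ | ∃ x ∈ M, ∃ y ∈ N, ‖x‖ = 1 ∧ ‖y‖ = 1 ∧ r = ‖(inner ℂ x y : ℂ)‖} := by
  refine ⟨1, fun r hr => ?_⟩
  obtain ⟨x, hx, y, hy, hx1, hy1, rfl⟩ := hr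
  calc ‖(inner ℂ x y : ℂ)‖ ≤ ‖x‖ * ‖y‖ := norm_inner_le_norm x y
  _ = 1 := by rw [hx1, hy1]; ring

lemma dixmier_nonneg (M N : Submodule ℂ H) : 0 ≤ dixmierAngle M N := by
  apply Real.sSup_nonneg
  rintro r ⟨x, hx, y, hy, hx1, hy1, rfl⟩
  positivity

lemma inner_le_dixmier {M N : Submodule ℂ H} {x y : H} (hx : x ∈ M) (hy : y ∈ N) :
    ‖(inner ℂ x y : ℂ)‖ ≤ dixmierAngle M N * (‖x‖ * ‖y‖) := by
  rcases eq_or_ne x 0 with rfl | hx0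
  · simp
  rcases eq_or_ne y 0 with rfl | hy0
  · simp
  have hxn : (0:ℝ) < ‖x‖ := norm_pos_iff.2 hx0
  have hyn : (0:ℝ) < ‖y‖ := norm_pos_iff.2 hy0
  have hmem : ‖(inner ℂ (((‖x‖⁻¹ : ℝ) : ℂ) • x) (((‖y‖⁻¹ : ℝ) : ℂ) • y) : ℂ)‖ ∈
      {r : ℝ | ∃ x ∈ M, ∃ y ∈ N, ‖x‖ = 1 ∧ ‖y‖ = 1 ∧ r = ‖(inner ℂ x y : ℂ)‖} := by
    refine ⟨_, M.smul_mem _ hx, _, N.smul_mem _ hy, ?_, ?_, rfl⟩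
    · rw [norm_smul]; simp; field_simp
    · rw [norm_smul]; simp; field_simp
  have hle := le_csSup (dixmier_bddAbove M N) hmem
  rw [inner_smul_left, inner_smul_right] at hle
  simp only [Complex.conj_ofReal, norm_mul, Complex.norm_real, Real.norm_eq_abs,
    abs_of_pos (inv_pos.2 hxn), abs_of_pos (inv_pos.2 hyn)] at hle
  have hd : dixmierAngle M N = sSup {r : ℝ | ∃ x ∈ M, ∃ y ∈ N, ‖x‖ = 1 ∧ ‖y‖ = 1 ∧ r = ‖(inner ℂ x y : ℂ)‖} := rfl
  rw [← hd] at hle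
  calc ‖(inner ℂ x y : ℂ)‖ = (‖x‖ * ‖y‖) * (‖x‖⁻¹ * (‖y‖⁻¹ * ‖(inner ℂ x y : ℂ)‖)) := by
        field_simp
  _ ≤ (‖x‖ * ‖y‖) * dixmierAngle M N := by
        exact mul_le_mul_of_nonneg_left hle (by positivity)
  _ = dixmierAngle M N * (‖x‖ * ‖y‖) := by ring

end Aux

section Aux2
set_option linter.unusedSectionVars false

variable {H : Type*} [NormedAddCommGroup H] [InnerProductSpace ℂ H] [CompleteSpace H]

lemma key2 {M N : Submodule ℂ H} : ∀ x ∈ M, ∀ y ∈ N,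
    (1 - dixmierAngle M N) * (‖x‖ ^ 2 + ‖y‖ ^ 2) ≤ ‖x + y‖ ^ 2 := by
  intro x hx y hy
  have h1 := @norm_add_sq ℂ _ _ _ _ x y
  have h2 : -‖(inner ℂ x y : ℂ)‖ ≤ RCLike.re (inner ℂ x y : ℂ) := by
    have := abs_le.1 (RCLike.abs_re_le_norm (inner ℂ x y : ℂ))
    linarith [this.1]
  have h3 := inner_le_dixmier hx hy
  have h4 := dixmier_nonneg M N
  nlinarith [sq_nonneg (‖x‖ - ‖y‖), mul_nonneg h4 (sq_nonneg (‖x‖ - ‖y‖)),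
    norm_nonneg x, norm_nonneg y]

lemma sup_closed {M N : Submodule ℂ H} (hM : IsClosed (M : Set H)) (hN : IsClosed (N : Set H))
    {c : ℝ} (hc : c < 1)
    (hkey : ∀ x ∈ M, ∀ y ∈ N, (1 - c) * (‖x‖ ^ 2 + ‖y‖ ^ 2) ≤ ‖x + y‖ ^ 2) :
    IsClosed ((M ⊔ N : Submodule ℂ H) : Set H) := by
  have hc1 : (0:ℝ) < 1 - c := by linarith
  refine IsSeqClosed.isClosed ?_
  intro u z hu hz
  choose x hx y hy hxy using fun n => Submodule.mem_sup.1 (hu n)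
  have hdiff : ∀ n m, (1 - c) * ‖x n - x m‖ ^ 2 ≤ ‖u n - u m‖ ^ 2 := by
    intro n m
    have h := hkey (x n - x m) (sub_mem (hx n) (hx m)) (y n - y m) (sub_mem (hy n) (hy m))
    have e : (x n - x m) + (y n - y m) = u n - u m := by
      rw [← hxy n, ← hxy m]; abel
    rw [e] at h
    nlinarith [sq_nonneg ‖y n - y m‖]
  have hcx : CauchySeq x := by
    have hcu : CauchySeq u := hz.cauchySeq
    rw [Metric.cauchySeq_iff] at hcu ⊢
    intro ε hε
    obtain ⟨Nn, hNn⟩ := hcu (Real.sqrt (1 - c) * ε) (by positivity)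
    refine ⟨Nn, fun n hn m hm => ?_⟩
    have h1 := hdiff n m
    have h2 := hNn n hn m hm
    rw [dist_eq_norm] at h2 ⊢
    have hs := Real.sq_sqrt hc1.le
    have h3 : ‖u n - u m‖ ^ 2 < (1 - c) * ε ^ 2 := by
      nlinarith [norm_nonneg (u n - u m), Real.sqrt_nonneg (1 - c),
        mul_nonneg (Real.sqrt_nonneg (1 - c)) hε.le]
    have h4 : ‖x n - x m‖ ^ 2 < ε ^ 2 := by nlinarith
    exact lt_of_pow_lt_pow_left₀ 2 hε.le h4
  obtain ⟨p, hp⟩ := cauchySeq_tendsto_of_complete hcx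
  have hpM : p ∈ M := hM.mem_of_tendsto hp (Filter.Eventually.of_forall hx)
  have hyt : Filter.Tendsto y Filter.atTop (nhds (z - p)) := by
    have he : y = fun n => u n - x n := funext fun n => by rw [← hxy n]; abel
    rw [he]
    exact hz.sub hp
  have hqN : z - p ∈ N := hN.mem_of_tendsto hyt (Filter.Eventually.of_forall hy)
  exact Submodule.mem_sup.2 ⟨p, hpM, z - p, hqN, by abel⟩

end Aux2

section Aux3
set_option linter.unusedSectionVars false
variable {H : Type*} [NormedAddCommGroup H] [InnerProductSpace ℂ H] [CompleteSpace H]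

lemma exists_proj {M N : Submodule ℂ H} (hM : IsClosed (M : Set H)) (hN : IsClosed (N : Set H))
    (hc : dixmierAngle M N < 1) :
    ∃ Q : H →L[ℂ] H, IsIdempotentElem Q ∧ LinearMap.range (Q : H →ₗ[ℂ] H) = M ∧ N ≤ LinearMap.ker (Q : H →ₗ[ℂ] H) := by
  have hc1 : (0:ℝ) < 1 - dixmierAngle M N := by linarith
  have hS : IsClosed ((M ⊔ N : Submodule ℂ H) : Set H) :=
    sup_closed hM hN hc (key2 (M := M) (N := N))
  set S := M ⊔ N with hSdef
  haveI : CompleteSpace S := hS.completeSpace_coe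
  have hMN : ∀ x, x ∈ M → x ∈ N → x = 0 := by
    intro x hxM hxN
    have h := key2 x hxM (-x) (neg_mem hxN)
    simp only [add_neg_cancel, norm_zero, norm_neg] at h
    have : ‖x‖ = 0 := by
      by_contra hne
      have hpos : 0 < ‖x‖ := lt_of_le_of_ne (norm_nonneg x) (Ne.symm hne)
      nlinarith [mul_pos hc1 (pow_pos hpos 2)]
    simpa using this
  set K := N ⊔ Sᗮ with hKdef
  have hKc : IsClosed (K : Set H) := by
    refine sup_closed hN (Submodule.isClosed_orthogonal S) (c := 0) one_pos ?_
    intro x hx y hy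
    have h0 : (inner ℂ x y : ℂ) = 0 :=
      Submodule.inner_right_of_mem_orthogonal (le_sup_right (a := M) hx) hy
    have := @norm_add_sq ℂ _ _ _ _ x y
    rw [h0] at this
    simp at this
    nlinarith
  have hcompl : IsCompl M K := by
    constructor
    · rw [Submodule.disjoint_def]
      intro x hxM hxK
      obtain ⟨y, hyN, w, hw, hxe⟩ := Submodule.mem_sup.1 hxK
      have hwS : w ∈ S := by
        have : w = x - y := by rw [← hxe]; abel
        rw [this]
        exact sub_mem (le_sup_left (b := N) hxM) (le_sup_right (a := M) hyN)
      have hw0 : w = 0 := (Submodule.disjoint_def.1 S.orthogonal_disjoint) w hwS hw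
      rw [hw0, add_zero] at hxe
      rw [hxe] at hyN
      exact hMN x hxM hyN
    · rw [codisjoint_iff, hKdef, ← sup_assoc, ← hSdef]
      exact Submodule.sup_orthogonal_of_hasOrthogonalProjection
  set P := M.linearProjOfClosedCompl K hcompl hM hKc with hPdef
  have hPleft : ∀ x, x ∈ M → ((P x : H)) = x := by
    intro x hx
    have : P x = M.linearProjOfIsCompl K hcompl x := rfl
    rw [this]
    exact congrArg _ (Submodule.linearProjOfIsCompl_apply_left hcompl ⟨x, hx⟩)
  have hPright : ∀ y, y ∈ K → P y = 0 := by
    intro y hy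
    have : P y = M.linearProjOfIsCompl K hcompl y := rfl
    rw [this]
    exact Submodule.linearProjOfIsCompl_apply_right' hcompl hy
  refine ⟨M.subtypeL ∘L P, ?_, ?_, ?_⟩
  · apply ContinuousLinearMap.ext
    intro z
    have h1 : ((M.subtypeL ∘L P) * (M.subtypeL ∘L P)) z
        = M.subtypeL (P (M.subtypeL (P z))) := rfl
    rw [h1]
    show (P ((P z : H)) : H) = (P z : H)
    rw [hPleft _ (P z).2]
  · apply le_antisymm
    · rintro _ ⟨w, rfl⟩
      exact (P w).2
    · intro x hx
      exact ⟨x, by show ((P x : H)) = x; exact hPleft x hx⟩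
  · intro y hy
    have : P y = 0 := hPright y (le_sup_left (b := Sᗮ) hy)
    show M.subtypeL (P y) = 0
    rw [this]
    rfl

end Aux3

section Aux4
set_option linter.unusedSectionVars false
variable {H : Type*} [NormedAddCommGroup H] [InnerProductSpace ℂ H] [CompleteSpace H]

lemma angle_lt {M N : Submodule ℂ H} (Q : H →L[ℂ] H) (hQ : IsIdempotentElem Q)
    (hfix : ∀ x ∈ M, Q x = x) (hker : ∀ y ∈ N, Q y = 0) : dixmierAngle M N < 1 := by
  have hd : dixmierAngle M N = sSup {r : ℝ | ∃ x ∈ M, ∃ y ∈ N, ‖x‖ = 1 ∧ ‖y‖ = 1 ∧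
      r = ‖(inner ℂ x y : ℂ)‖} := rfl
  rcases Set.eq_empty_or_nonempty {r : ℝ | ∃ x ∈ M, ∃ y ∈ N, ‖x‖ = 1 ∧ ‖y‖ = 1 ∧
      r = ‖(inner ℂ x y : ℂ)‖} with he | hne
  · rw [hd, he, Real.sSup_empty]; norm_num
  obtain ⟨r₀, x₀, hx₀, y₀, hy₀, hx₀1, hy₀1, hr₀⟩ := hne
  have hQ1 : 1 ≤ ‖Q‖ := by
    have h1 : Q x₀ = x₀ := hfix x₀ hx₀
    have h2 : ‖Q x₀‖ ≤ ‖Q‖ * ‖x₀‖ := Q.le_opNorm x₀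
    rw [h1, hx₀1, mul_one] at h2
    exact h2
  have hQpos : (0:ℝ) < 2 * ‖Q‖ ^ 2 := by nlinarith
  have hbound : ∀ r ∈ {r : ℝ | ∃ x ∈ M, ∃ y ∈ N, ‖x‖ = 1 ∧ ‖y‖ = 1 ∧
      r = ‖(inner ℂ x y : ℂ)‖}, r ≤ 1 - 1 / (2 * ‖Q‖ ^ 2) := by
    rintro r ⟨x, hxM, y, hyN, hx1, hy1, rfl⟩
    set z : ℂ := inner ℂ x y with hz
    rcases eq_or_ne z 0 with h0 | h0
    · rw [h0, norm_zero]
      rw [le_sub_iff_add_le, zero_add, div_le_one hQpos]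
      nlinarith
    · have hznorm : (0:ℝ) < ‖z‖ := norm_pos_iff.2 h0
      set μ : ℂ := (starRingEnd ℂ) z / (‖z‖ : ℂ) with hμdef
      have hμ : ‖μ‖ = 1 := by
        rw [hμdef, norm_div, RCLike.norm_conj, Complex.norm_real, Real.norm_eq_abs,
          abs_of_pos hznorm, div_self (ne_of_gt hznorm)]
      have hinner : (inner ℂ x (μ • y) : ℂ) = (‖z‖ : ℝ) := by
        have hne : ((‖z‖:ℝ):ℂ) ≠ 0 := by exact_mod_cast ne_of_gt hznorm
        rw [inner_smul_right, ← hz, hμdef, div_mul_eq_mul_div, RCLike.conj_mul]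
        push_cast
        rw [pow_two]
        field_simp
        rfl
      have hμy : ‖μ • y‖ = 1 := by rw [norm_smul, hμ, hy1, mul_one]
      have hv := @norm_sub_sq ℂ _ _ _ _ x (μ • y)
      rw [hinner] at hv
      have hre : RCLike.re ((‖z‖ : ℝ) : ℂ) = ‖z‖ := by simp
      rw [hre, hx1, hμy] at hv
      have hQv : Q (x - μ • y) = x := by
        rw [map_sub, hfix x hxM, map_smul, hker y hyN, smul_zero, sub_zero]
      have h1 : 1 ≤ ‖Q‖ * ‖x - μ • y‖ := by
        have h2 : ‖Q (x - μ • y)‖ ≤ ‖Q‖ * ‖x - μ • y‖ := Q.le_opNorm _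
        rwa [hQv, hx1] at h2
      have hvn : 0 ≤ ‖x - μ • y‖ := norm_nonneg _
      have h3 : 1 ≤ ‖Q‖ ^ 2 * ‖x - μ • y‖ ^ 2 := by nlinarith
      rw [le_sub_iff_add_le, add_comm, ← le_sub_iff_add_le, div_le_iff₀ hQpos]
      nlinarith
  rw [hd]
  refine lt_of_le_of_lt (csSup_le ⟨r₀, x₀, hx₀, y₀, hy₀, hx₀1, hy₀1, hr₀⟩ hbound) ?_
  have : 0 < 1 / (2 * ‖Q‖ ^ 2) := by positivity
  linarith

end Aux4

variable {H₁ H₂ : Type*} [NormedAddCommGroup H₁] [InnerProductSpace ℂ H₁] [CompleteSpace H₁]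
  [NormedAddCommGroup H₂] [InnerProductSpace ℂ H₂] [CompleteSpace H₂]

lemma idem_fix {Q : H₂ →L[ℂ] H₂} (hQ : IsIdempotentElem Q) {x : H₂}
    (hx : x ∈ LinearMap.range (Q : H₂ →ₗ[ℂ] H₂)) : Q x = x := by
  obtain ⟨w, rfl⟩ := hx
  have := congrArg (fun f : H₂ →L[ℂ] H₂ => f w) hQ
  exact this

lemma idem_range_closed {Q : H₂ →L[ℂ] H₂} (hQ : IsIdempotentElem Q) :
    IsClosed ((LinearMap.range (Q : H₂ →ₗ[ℂ] H₂) : Submodule ℂ H₂) : Set H₂) := by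
  have : (LinearMap.range (Q : H₂ →ₗ[ℂ] H₂) : Submodule ℂ H₂) = LinearMap.ker ((ContinuousLinearMap.id ℂ H₂ - Q : H₂ →L[ℂ] H₂) : H₂ →ₗ[ℂ] H₂) := by
    ext z
    simp only [LinearMap.mem_ker, ContinuousLinearMap.coe_coe, ContinuousLinearMap.coe_sub', Pi.sub_apply,
      ContinuousLinearMap.coe_id', id_eq, sub_eq_zero]
    constructor
    · intro hz; exact (idem_fix hQ hz).symm
    · intro hz; exact ⟨z, hz.symm⟩
  rw [this]
  exact ContinuousLinearMap.isClosed_ker _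

theorem dixmier_lt_one_iff_projection (A B : H₁ →L[ℂ] H₂) :
    (dixmierAngle (LinearMap.range (A : H₁ →ₗ[ℂ] H₂)).topologicalClosure
        (LinearMap.range ((B - A : H₁ →L[ℂ] H₂) : H₁ →ₗ[ℂ] H₂)).topologicalClosure < 1 ↔
      ∃ Q : H₂ →L[ℂ] H₂, IsIdempotentElem Q ∧
        LinearMap.range (Q : H₂ →ₗ[ℂ] H₂) = (LinearMap.range (A : H₁ →ₗ[ℂ] H₂)).topologicalClosure ∧
          A = Q ∘L B) ∧
    ((∃ Q : H₂ →L[ℂ] H₂, IsIdempotentElem Q ∧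
        LinearMap.range (Q : H₂ →ₗ[ℂ] H₂) = (LinearMap.range (A : H₁ →ₗ[ℂ] H₂)).topologicalClosure ∧
          A = Q ∘L B) ↔
      ∃ Q : H₂ →L[ℂ] H₂, IsIdempotentElem Q ∧ A = Q ∘L B) := by
  set M := (LinearMap.range (A : H₁ →ₗ[ℂ] H₂)).topologicalClosure with hMdef
  set N := (LinearMap.range ((B - A : H₁ →L[ℂ] H₂) : H₁ →ₗ[ℂ] H₂)).topologicalClosure with hNdef
  have hMc : IsClosed (M : Set H₂) := Submodule.isClosed_topologicalClosure _
  have hNc : IsClosed (N : Set H₂) := Submodule.isClosed_topologicalClosure _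
  constructor
  · constructor
    · intro hc
      obtain ⟨Q, hidem, hrange, hkerN⟩ := exists_proj hMc hNc hc
      refine ⟨Q, hidem, hrange, ?_⟩
      ext v
      have h1 : A v ∈ M := (LinearMap.range (A : H₁ →ₗ[ℂ] H₂)).le_topologicalClosure ⟨v, rfl⟩
      have hfix : Q (A v) = A v := idem_fix hidem (hrange ▸ h1)
      have h2 : (B - A) v ∈ LinearMap.ker (Q : H₂ →ₗ[ℂ] H₂) :=
        hkerN ((LinearMap.range ((B - A : H₁ →L[ℂ] H₂) : H₁ →ₗ[ℂ] H₂)).le_topologicalClosure ⟨v, rfl⟩)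
      have h3 : Q (B v - A v) = 0 := by
        have := LinearMap.mem_ker.1 h2
        rwa [ContinuousLinearMap.sub_apply] at this
      rw [map_sub] at h3
      have : Q (B v) = A v := by rw [sub_eq_zero] at h3; rw [h3, hfix]
      simpa [ContinuousLinearMap.comp_apply] using this.symm
    · rintro ⟨Q, hidem, hrange, hAB⟩
      apply angle_lt Q hidem
      · intro x hx
        exact idem_fix hidem (hrange.symm ▸ hx)
      · intro y hy
        have hsub : N ≤ LinearMap.ker (Q : H₂ →ₗ[ℂ] H₂) := by
          apply Submodule.topologicalClosure_minimal
          · rintro _ ⟨v, rfl⟩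
            have hAv : A v = Q (B v) := by rw [hAB]; rfl
            have : Q ((B - A) v) = 0 := by
              rw [ContinuousLinearMap.sub_apply, map_sub, hAv,
                ← ContinuousLinearMap.comp_apply Q Q, ← ContinuousLinearMap.mul_def, hidem,
                sub_self]
            exact LinearMap.mem_ker.2 this
          · exact ContinuousLinearMap.isClosed_ker _
        exact LinearMap.mem_ker.1 (hsub hy)
  · constructor
    · rintro ⟨Q, h1, _, h3⟩; exact ⟨Q, h1, h3⟩
    · rintro ⟨Q, hidem, hAB⟩
      haveI : CompleteSpace M := hMc.completeSpace_coe
      set E : H₂ →L[ℂ] H₂ := M.subtypeL ∘L orthogonalProjection M with hEdef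
      have hErange : ∀ z, E z ∈ M := fun z => (orthogonalProjection M z).2
      have hEfix : ∀ x ∈ M, E x = x := fun x hx => M.starProjection_eq_self_iff.2 hx
      have hQrc : IsClosed ((LinearMap.range (Q : H₂ →ₗ[ℂ] H₂) : Submodule ℂ H₂) : Set H₂) :=
        idem_range_closed hidem
      have hMQ : M ≤ LinearMap.range (Q : H₂ →ₗ[ℂ] H₂) := by
        apply Submodule.topologicalClosure_minimal
        · rintro _ ⟨v, rfl⟩
          exact ⟨B v, by rw [hAB]; rfl⟩
        · exact hQrc
      have hQfixM : ∀ x ∈ M, Q x = x := fun x hx => idem_fix hidem (hMQ hx)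
      refine ⟨E ∘L Q, ?_, ?_, ?_⟩
      · apply ContinuousLinearMap.ext
        intro z
        show E (Q (E (Q z))) = E (Q z)
        rw [hQfixM _ (hErange _), hEfix _ (hErange _)]
      · apply le_antisymm
        · rintro _ ⟨w, rfl⟩
          exact hErange _
        · intro x hx
          exact ⟨x, by show E (Q x) = x; rw [hQfixM x hx, hEfix x hx]⟩
      · ext v
        show A v = E (Q (B v))
        have hAv : Q (B v) = A v := by rw [hAB]; rfl
        rw [hAv, hEfix (A v) ((LinearMap.range (A : H₁ →ₗ[ℂ] H₂)).le_topologicalClosure ⟨v, rfl⟩)]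
end

section
/- If A ≤⁻ B in the minus order and A ≤⁻ B holds via projections, then R(A) ⊆ R(B) and R(A*) ⊆ R(B*). Moreover, if B is a projection (idempotent) and A ≤⁻ B, then A is also a projection. -/
open ContinuousLinearMap Submodule

variable {H₁ H₂ : Type*} [NormedAddCommGroup H₁] [InnerProductSpace ℂ H₁] [CompleteSpace H₁]
  [NormedAddCommGroup H₂] [InnerProductSpace ℂ H₂] [CompleteSpace H₂]

theorem minus_le_range_and_projection (A B : H₁ →L[ℂ] H₂)
    (h : ∃ (Q : H₂ →L[ℂ] H₂) (P : H₁ →L[ℂ] H₁),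
      IsIdempotentElem Q ∧ IsIdempotentElem P ∧ A = Q ∘L B ∧ A = B ∘L P) :
    (LinearMap.range (A : H₁ →ₗ[ℂ] H₂) ≤ LinearMap.range (B : H₁ →ₗ[ℂ] H₂) ∧
      LinearMap.range (adjoint A : H₂ →ₗ[ℂ] H₁) ≤ LinearMap.range (adjoint B : H₂ →ₗ[ℂ] H₁)) ∧
    (∀ A' B' : H₁ →L[ℂ] H₁, IsIdempotentElem B' →
      (∃ (Q : H₁ →L[ℂ] H₁) (P : H₁ →L[ℂ] H₁),
        IsIdempotentElem Q ∧ IsIdempotentElem P ∧ A' = Q ∘L B' ∧ A' = B' ∘L P) →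
      IsIdempotentElem A') := by
  obtain ⟨Q, P, hQ, hP, hQB, hBP⟩ := h
  refine ⟨⟨?_, ?_⟩, ?_⟩
  · rintro y ⟨x, rfl⟩
    exact ⟨P x, by rw [hBP]; rfl⟩
  · rintro y ⟨x, rfl⟩
    refine ⟨adjoint Q x, ?_⟩
    rw [hQB, adjoint_comp]
    rfl
  · rintro A' B' hB' ⟨Q', P', hQ', hP', hQB', hBP'⟩
    have hB'' : B' ∘L B' = B' := hB'
    have hP'' : P' ∘L P' = P' := hP'
    have eB := fun y => DFunLike.congr_fun hB'' y
    have eP := fun y => DFunLike.congr_fun hP'' y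
    have e1 := fun y => DFunLike.congr_fun hQB' y
    have e2 := fun y => DFunLike.congr_fun hBP' y
    simp only [comp_apply] at eB eP e1 e2
    have key : ∀ x, A' (A' x) = A' x := by
      intro x
      calc A' (A' x) = Q' (B' (B' (P' x))) := by rw [e1, e2]
        _ = Q' (B' (P' x)) := by rw [eB]
        _ = A' (P' x) := (e1 _).symm
        _ = B' (P' (P' x)) := e2 _
        _ = B' (P' x) := by rw [eP]
        _ = A' x := (e2 x).symm
    exact ContinuousLinearMap.ext fun x => key x
end

section
/- Let A, B : H1 → H2 be parallel summable, i.e., R(A) ⊆ R(A+B) and R(A*) ⊆ R(A*+B*). Then the range of the parallel sum satisfies R(A : B) = R(A) ∩ R(B). -/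
open ContinuousLinearMap Submodule

local notation "⟪" x ", " y "⟫" => @inner ℂ _ _ x y

private lemma aux_pow4_inj {H : Type*} [NormedAddCommGroup H] [InnerProductSpace ℂ H]
    [CompleteSpace H] (a b : H →L[ℂ] H) (ha : 0 ≤ a) (hb : 0 ≤ b) (h : a ^ 4 = b ^ 4) :
    a = b := by
  have sq_nonneg : ∀ c : H →L[ℂ] H, 0 ≤ c → 0 ≤ c ^ 2 := fun c hc => by
    have hsa : IsSelfAdjoint c := IsSelfAdjoint.of_nonneg hc
    calc (0 : H →L[ℂ] H) ≤ star c * c := star_mul_self_nonneg c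
      _ = c ^ 2 := by rw [hsa.star_eq, sq]
  have h2 : a ^ 2 = b ^ 2 := by
    have t1 := CFC.sqrt_sq (a ^ 2) (sq_nonneg a ha)
    have t2 := CFC.sqrt_sq (b ^ 2) (sq_nonneg b hb)
    rw [← pow_mul] at t1 t2
    norm_num at t1 t2
    rw [← t1, ← t2, h]
  calc a = CFC.sqrt (a ^ 2) := (CFC.sqrt_sq a ha).symm
    _ = CFC.sqrt (b ^ 2) := by rw [h2]
    _ = b := CFC.sqrt_sq b hb

variable {H₁ H₂ : Type*} [NormedAddCommGroup H₁] [InnerProductSpace ℂ H₁] [CompleteSpace H₁]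
  [NormedAddCommGroup H₂] [InnerProductSpace ℂ H₂] [CompleteSpace H₂]

set_option maxHeartbeats 1000000 in
theorem range_parallel_sum    (A B : H₁ →L[ℂ] H₂)
    (Ch : H₁ →L[ℂ] H₁) (Dh : H₂ →L[ℂ] H₂) (U : H₁ →L[ℂ] H₂)
    (EA EB : H₁ →L[ℂ] H₁) (FA FB : H₂ →L[ℂ] H₁)
    (hCh : Ch.IsPositive) (hCh4 : Ch ∘L Ch ∘L Ch ∘L Ch = adjoint (A + B) ∘L (A + B))
    (hDh : Dh.IsPositive) (hDh4 : Dh ∘L Dh ∘L Dh ∘L Dh = (A + B) ∘L adjoint (A + B))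
    (hU : A + B = U ∘L (Ch ∘L Ch)) (hU0 : ∀ x, (A + B) x = 0 → U x = 0)
    (hEA : (Dh ∘L U) ∘L EA = A) (hEA' : LinearMap.range (EA : H₁ →ₗ[ℂ] H₁) ≤ (LinearMap.ker (Dh ∘L U : H₁ →ₗ[ℂ] H₂))ᗮ)
    (hEB : (Dh ∘L U) ∘L EB = B) (hEB' : LinearMap.range (EB : H₁ →ₗ[ℂ] H₁) ≤ (LinearMap.ker (Dh ∘L U : H₁ →ₗ[ℂ] H₂))ᗮ)
    (hFA : Ch ∘L FA = adjoint A) (hFA' : LinearMap.range (FA : H₂ →ₗ[ℂ] H₁) ≤ (LinearMap.ker (Ch : H₁ →ₗ[ℂ] H₁))ᗮ)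
    (hFB : Ch ∘L FB = adjoint B) (hFB' : LinearMap.range (FB : H₂ →ₗ[ℂ] H₁) ≤ (LinearMap.ker (Ch : H₁ →ₗ[ℂ] H₁))ᗮ)
    (hsum₁ : LinearMap.range (A : H₁ →ₗ[ℂ] H₂) ≤ LinearMap.range ((A + B : H₁ →L[ℂ] H₂) : H₁ →ₗ[ℂ] H₂))
    (hsum₂ : LinearMap.range (adjoint A : H₂ →ₗ[ℂ] H₁) ≤ LinearMap.range (adjoint (A + B) : H₂ →ₗ[ℂ] H₁)) :
    LinearMap.range ((A - adjoint FA ∘L EA : H₁ →L[ℂ] H₂) : H₁ →ₗ[ℂ] H₂) =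
      LinearMap.range (A : H₁ →ₗ[ℂ] H₂) ⊓ LinearMap.range (B : H₁ →ₗ[ℂ] H₂) := by
  have hChadj : adjoint Ch = Ch := isSelfAdjoint_iff'.mp hCh.isSelfAdjoint
  have hChsa : ∀ x y : H₁, ⟪Ch x, y⟫ = ⟪x, Ch y⟫ := fun x y => by
    nth_rewrite 1 [← hChadj]; rw [adjoint_inner_left]
  -- S applied
  have hSapp : ∀ x, (A + B) x = U (Ch (Ch x)) := fun x => by
    rw [hU]; rfl
  -- kernel facts
  have hker2 : ∀ z, Ch (Ch z) = 0 → Ch z = 0 := fun z hz => by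
    have : ⟪Ch z, Ch z⟫ = 0 := by rw [hChsa, hz, inner_zero_right]
    exact inner_self_eq_zero.mp this
  have hUker : ∀ z, Ch z = 0 → U z = 0 := fun z hz => by
    apply hU0
    rw [hSapp, hz, map_zero, map_zero]
  have hkerS : ∀ z, (A + B) z = 0 → Ch z = 0 := fun z hz => by
    have h4 : Ch (Ch (Ch (Ch z))) = 0 := by
      have := congrArg (fun T : H₁ →L[ℂ] H₁ => T z) hCh4
      simp only [coe_comp', Function.comp_apply] at this
      rw [this, hz, map_zero]
    exact hker2 z (hker2 _ (hker2 _ h4))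
  -- inner product identity from hCh4
  have hC1 : ∀ x y, ⟪U (Ch (Ch x)), U (Ch (Ch y))⟫ = ⟪Ch (Ch x), Ch (Ch y)⟫ := by
    intro x y
    have := congrArg (fun T : H₁ →L[ℂ] H₁ => ⟪T x, y⟫) hCh4
    simp only [coe_comp', Function.comp_apply] at this
    rw [adjoint_inner_left] at this
    rw [← hSapp, ← hSapp, ← this, hChsa, hChsa]
  -- closure auxiliary
  have aux : ∀ a : H₁, (∀ z, Ch z = 0 → ⟪a, z⟫ = 0) → (∀ y, ⟪a, Ch (Ch y)⟫ = 0) → a = 0 := by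
    intro a h1 h2
    have hmem : a ∈ (LinearMap.ker (Ch : H₁ →ₗ[ℂ] H₁))ᗮ := by
      intro z hz
      rw [inner_eq_zero_symm]
      exact h1 z hz
    have horth : (LinearMap.range ((Ch ∘L Ch : H₁ →L[ℂ] H₁) : H₁ →ₗ[ℂ] H₁))ᗮ = LinearMap.ker (Ch : H₁ →ₗ[ℂ] H₁) := by
      ext y
      constructor
      · intro h
        have hy := h (Ch (Ch y)) ⟨y, rfl⟩
        have h2' : ⟪Ch y, Ch y⟫ = 0 := by rw [← hChsa]; exact hy
        simpa [LinearMap.mem_ker] using inner_self_eq_zero.mp h2'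
      · intro hy u hu
        obtain ⟨x, rfl⟩ := hu
        have hy' : Ch y = 0 := hy
        simp only [coe_coe, coe_comp', Function.comp_apply]
        rw [hChsa, hy', inner_zero_right]
    have hclos : a ∈ (LinearMap.range ((Ch ∘L Ch : H₁ →L[ℂ] H₁) : H₁ →ₗ[ℂ] H₁)).topologicalClosure := by
      rw [← horth] at hmem
      rwa [Submodule.orthogonal_orthogonal_eq_closure] at hmem
    have hset : (↑(LinearMap.range ((Ch ∘L Ch : H₁ →L[ℂ] H₁) : H₁ →ₗ[ℂ] H₁)).topologicalClosure : Set H₁) ⊆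
        {v | ⟪a, v⟫ = 0} := by
      have hcl : IsClosed {v : H₁ | ⟪a, v⟫ = 0} :=
        isClosed_eq (continuous_const.inner continuous_id) continuous_const
      rw [Submodule.topologicalClosure_coe]
      apply closure_minimal _ hcl
      rintro v ⟨x, rfl⟩
      exact h2 x
    exact inner_self_eq_zero.mp (hset hclos)
  -- U* U = id on range of Ch
  have hUU2 : ∀ x, adjoint U (U (Ch (Ch x))) = Ch (Ch x) := by
    intro x
    have h0 : adjoint U (U (Ch (Ch x))) - Ch (Ch x) = 0 := by
      apply aux
      · intro z hz
        rw [inner_sub_left, adjoint_inner_left, hUker z hz, inner_zero_right,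
          hChsa, hz, inner_zero_right, sub_zero]
      · intro y
        rw [inner_sub_left, adjoint_inner_left, hC1, sub_self]
    exact sub_eq_zero.mp h0
  have hUU1 : ∀ x, adjoint U (U (Ch x)) = Ch x := by
    intro x
    have h0 : adjoint U (U (Ch x)) - Ch x = 0 := by
      apply aux
      · intro z hz
        rw [inner_sub_left, adjoint_inner_left, hUker z hz, inner_zero_right,
          hChsa, hz, inner_zero_right, sub_zero]
      · intro y
        rw [inner_sub_left, adjoint_inner_left, ← adjoint_inner_right, hUU2, sub_self]
    exact sub_eq_zero.mp h0
  have hChUU : ∀ x, Ch (adjoint U (U x)) = Ch x := by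
    intro x
    apply ext_inner_right ℂ
    intro y
    rw [hChsa, adjoint_inner_left, ← adjoint_inner_right, hUU1, ← hChsa]
  -- key lemma : Dh ∘ U = U ∘ Ch
  have hDU : ∀ x, Dh (U x) = U (Ch x) := by
    set D' : H₂ →L[ℂ] H₂ := U ∘L (Ch ∘L adjoint U) with hD'
    have hD'app : ∀ x, D' x = U (Ch (adjoint U x)) := fun x => rfl
    have hD'pos : 0 ≤ D' := by
      rw [nonneg_iff_isPositive]
      constructor
      · rw [← isSelfAdjoint_iff_isSymmetric, isSelfAdjoint_iff']
        rw [hD', adjoint_comp, adjoint_comp, adjoint_adjoint, hChadj, comp_assoc]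
      · intro x
        have : D'.reApplyInnerSelf x = Ch.reApplyInnerSelf (adjoint U x) := by
          simp only [reApplyInnerSelf, hD'app]
          rw [← adjoint_inner_right]
        rw [this]
        exact hCh.2 _
    have hDhpos : 0 ≤ Dh := (nonneg_iff_isPositive Dh).mpr hDh
    have hpow : D' ^ 4 = Dh ^ 4 := by
      have hD2 : ∀ x, D' (D' x) = U (Ch (Ch (adjoint U x))) := by
        intro x
        rw [hD'app, hD'app, hChUU]
      ext x
      have lhs : (D' ^ 4) x = D' (D' (D' (D' x))) := by
        simp [pow_succ, mul_apply]
      have rhs : (Dh ^ 4) x = Dh (Dh (Dh (Dh x))) := by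
        simp [pow_succ, mul_apply]
      rw [lhs, rhs]
      have h4 : Dh (Dh (Dh (Dh x))) = (A + B) (adjoint (A + B) x) := by
        have := congrArg (fun T : H₂ →L[ℂ] H₂ => T x) hDh4
        simpa only [coe_comp', Function.comp_apply] using this
      have hadjS : adjoint (A + B) x = Ch (Ch (adjoint U x)) := by
        rw [hU, adjoint_comp, adjoint_comp, hChadj]
        rfl
      calc D' (D' (D' (D' x)))
          = D' (D' (U (Ch (Ch (adjoint U x))))) := by rw [hD2 x]
        _ = U (Ch (Ch (adjoint U (U (Ch (Ch (adjoint U x))))))) := hD2 _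
        _ = U (Ch (Ch (Ch (Ch (adjoint U x))))) := by rw [hUU2]
        _ = (A + B) (Ch (Ch (adjoint U x))) := (hSapp _).symm
        _ = Dh (Dh (Dh (Dh x))) := by rw [h4, hadjS]
    have hDD : Dh = D' := aux_pow4_inj Dh D' hDhpos hD'pos hpow.symm
    intro x
    rw [hDD, hD'app, hChUU]
  -- kernel of T = Dh ∘ U
  have hkerT : ∀ z, Dh (U z) = 0 → Ch z = 0 := by
    intro z hz
    rw [hDU] at hz
    have : ⟪Ch z, Ch z⟫ = 0 := by
      rw [← hUU1 z, adjoint_inner_left, hz, inner_zero_left]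
    exact inner_self_eq_zero.mp this
  have hChmem : ∀ w, Ch w ∈ (LinearMap.ker (Dh ∘L U : H₁ →ₗ[ℂ] H₂))ᗮ := by
    intro w z hz
    have hz' : Dh (U z) = 0 := hz
    rw [inner_eq_zero_symm, hChsa, hkerT z hz', inner_zero_right]
  have huniq : ∀ d : H₁, d ∈ (LinearMap.ker (Dh ∘L U : H₁ →ₗ[ℂ] H₂))ᗮ → Dh (U d) = 0 → d = 0 := by
    intro d hd hd0
    have hdk : d ∈ LinearMap.ker (Dh ∘L U : H₁ →ₗ[ℂ] H₂) := hd0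
    have : ⟪d, d⟫ = 0 := hd d hdk
    exact inner_self_eq_zero.mp this
  -- T values
  have hTCh : ∀ x, Dh (U (Ch x)) = (A + B) x := fun x => by
    rw [hDU, hSapp]
  have hTEA : ∀ x, Dh (U (EA x)) = A x := fun x => by
    have := congrArg (fun T : H₁ →L[ℂ] H₂ => T x) hEA
    simpa only [coe_comp', Function.comp_apply] using this
  have hTEB : ∀ x, Dh (U (EB x)) = B x := fun x => by
    have := congrArg (fun T : H₁ →L[ℂ] H₂ => T x) hEB
    simpa only [coe_comp', Function.comp_apply] using this
  -- EA + EB = Ch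
  have hEAB : ∀ x, EA x + EB x = Ch x := by
    intro x
    have hd : EA x + EB x - Ch x = 0 := by
      apply huniq
      · exact Submodule.sub_mem _ (Submodule.add_mem _ (hEA' ⟨x, rfl⟩) (hEB' ⟨x, rfl⟩))
          (hChmem x)
      · simp only [map_sub, map_add, hTEA, hTEB, hTCh, add_apply]
        abel
    exact sub_eq_zero.mp hd
  -- range of EA/EB lies in range of Ch
  have hrange : ∀ (E' : H₁ →L[ℂ] H₁) (C' : H₁ →L[ℂ] H₂),
      (∀ x, Dh (U (E' x)) = C' x) → LinearMap.range (E' : H₁ →ₗ[ℂ] H₁) ≤ (LinearMap.ker (Dh ∘L U : H₁ →ₗ[ℂ] H₂))ᗮ →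
      LinearMap.range (C' : H₁ →ₗ[ℂ] H₂) ≤ LinearMap.range ((A + B : H₁ →L[ℂ] H₂) : H₁ →ₗ[ℂ] H₂) →
      ∀ x, ∃ w, E' x = Ch w ∧ (A + B) w = C' x := by
    intro E' C' hTE hE'mem hsum x
    obtain ⟨w, hw⟩ := hsum ⟨x, rfl⟩
    simp only [coe_coe] at hw
    refine ⟨w, ?_, hw⟩
    have hd : E' x - Ch w = 0 := by
      apply huniq
      · exact Submodule.sub_mem _ (hE'mem ⟨x, rfl⟩) (hChmem w)
      · rw [map_sub, map_sub, hTE, hTCh, hw, sub_self]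
    rw [sub_eq_zero.mp hd]
  have hsumB : LinearMap.range (B : H₁ →ₗ[ℂ] H₂) ≤ LinearMap.range ((A + B : H₁ →L[ℂ] H₂) : H₁ →ₗ[ℂ] H₂) := by
    rintro y ⟨x, rfl⟩
    obtain ⟨w, hw⟩ := hsum₁ ⟨x, rfl⟩
    exact ⟨x - w, by rw [map_sub, hw]; simp⟩
  have hEArange := hrange EA A hTEA hEA' hsum₁
  have hEBrange := hrange EB B hTEB hEB' hsumB
  -- adjoint FA ∘ Ch = A
  have hFAadj : ∀ w, adjoint FA (Ch w) = A w := by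
    intro w
    have := congrArg adjoint hFA
    rw [adjoint_comp, hChadj, adjoint_adjoint] at this
    have := congrArg (fun T : H₁ →L[ℂ] H₂ => T w) this
    simpa only [coe_comp', Function.comp_apply] using this
  -- conclusion
  ext y
  simp only [LinearMap.mem_range, Submodule.mem_inf, coe_coe]
  constructor
  · rintro ⟨x, rfl⟩
    obtain ⟨w, hw1, hw2⟩ := hEArange x
    have hval : (A - adjoint FA ∘L EA) x = A x - A w := by
      simp only [sub_apply, coe_comp', Function.comp_apply]
      rw [hw1, hFAadj]
    constructor
    · exact ⟨x - w, by rw [map_sub, ← hval]⟩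
    · refine ⟨w, ?_⟩
      rw [hval, ← hw2, add_apply]
      abel
  · rintro ⟨⟨a, ha⟩, ⟨b, hb⟩⟩
    refine ⟨a + b, ?_⟩
    obtain ⟨wa, hwa1, hwa2⟩ := hEArange a
    obtain ⟨v, hv1, hv2⟩ := hEBrange b
    have hChveq : Ch v = Ch wa := by
      have hz : (A + B) (v - wa) = 0 := by
        rw [map_sub, hv2, hwa2, ha, hb, sub_self]
      have := hkerS _ hz
      rw [map_sub, sub_eq_zero] at this
      exact this
    have hEAb : EA b = Ch b - EB b := by
      rw [← hEAB b]; abel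
    simp only [sub_apply, coe_comp', Function.comp_apply, map_add]
    rw [hEAb, hwa1]
    rw [map_sub, hv1, hChveq, hFAadj, hFAadj, ha]
    abel
end

section
/- Let A, B : H1 → H2 be bounded operators such that R(A) ⊆ T, R(A*) ⊆ S, R(B) = T, and R(B*) = S, where S ⊆ H1 and T ⊆ H2 are closed subspaces. Then there exists n₀ ∈ ℕ such that for all n ≥ n₀, R(A + nB) = T and R((A + nB)*) = S. -/
open ContinuousLinearMap Submodule

variable {H₁ H₂ : Type*} [NormedAddCommGroup H₁] [InnerProductSpace ℂ H₁] [CompleteSpace H₁]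
  [NormedAddCommGroup H₂] [InnerProductSpace ℂ H₂] [CompleteSpace H₂]

private lemma myker (C : H₁ →L[ℂ] H₂) :
    LinearMap.ker (C : H₁ →ₗ[ℂ] H₂) = (LinearMap.range (adjoint C : H₂ →ₗ[ℂ] H₁))ᗮ := by
  ext x
  constructor
  · intro hx
    rw [Submodule.mem_orthogonal' _ _]
    rintro _ ⟨y, rfl⟩
    rw [ContinuousLinearMap.coe_coe, ContinuousLinearMap.adjoint_inner_right]
    simp [show C x = 0 from LinearMap.mem_ker.mp hx]
  · intro hx
    have := (Submodule.mem_orthogonal' _ _).mp hx (adjoint C (C x)) ⟨C x, rfl⟩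
    rw [ContinuousLinearMap.adjoint_inner_right, inner_self_eq_zero] at this
    exact LinearMap.mem_ker.mpr this

private lemma boundedBelow (S : Submodule ℂ H₁) (T : Submodule ℂ H₂)
    (hS : IsClosed (S : Set H₁)) (hT : IsClosed (T : Set H₂))
    (B : H₁ →L[ℂ] H₂)
    (hB : LinearMap.range (B : H₁ →ₗ[ℂ] H₂) = T) (hB' : LinearMap.range (adjoint B : H₂ →ₗ[ℂ] H₁) = S) :
    ∃ k : ℝ, 0 ≤ k ∧ ∀ x ∈ S, ‖x‖ ≤ k * ‖B x‖ := by
  haveI : CompleteSpace S := hS.completeSpace_coe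
  haveI : CompleteSpace T := hT.completeSpace_coe
  have hkerB : LinearMap.ker (B : H₁ →ₗ[ℂ] H₂) = Sᗮ := by rw [myker, hB']
  set g : S →L[ℂ] T := (B.comp S.subtypeL).codRestrict T
    (fun x => hB ▸ LinearMap.mem_range_self _ _) with hg
  have hinj : LinearMap.ker (g : S →ₗ[ℂ] T) = ⊥ := by
    rw [Submodule.eq_bot_iff]
    rintro ⟨x, hx⟩ hxk
    have hBx : B x = 0 := by
      have := LinearMap.mem_ker.mp hxk
      have := congrArg (Subtype.val) this
      simpa [hg] using this
    have hxo : x ∈ Sᗮ := hkerB ▸ LinearMap.mem_ker.mpr hBx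
    have : x = 0 := by
      have := (Submodule.mem_orthogonal _ _).mp hxo x hx
      simpa [inner_self_eq_zero] using this
    exact Subtype.ext this
  have hsurj : LinearMap.range (g : S →ₗ[ℂ] T) = ⊤ := by
    rw [Submodule.eq_top_iff']
    rintro ⟨y, hy⟩
    obtain ⟨u, hu⟩ : ∃ u, B u = y := by rwa [← hB] at hy
    obtain ⟨s, hs, s', hs', rfl⟩ := S.exists_add_mem_mem_orthogonal u
    have hBs' : B s' = 0 := LinearMap.mem_ker.mp (hkerB ▸ hs')
    refine ⟨⟨s, hs⟩, ?_⟩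
    apply Subtype.ext
    simp [hg, ← hu, map_add, hBs']
  set e := ContinuousLinearEquiv.ofBijective g hinj hsurj with he
  refine ⟨‖(e.symm : T →L[ℂ] S)‖, norm_nonneg _, fun x hx => ?_⟩
  have h1 : e.symm (e ⟨x, hx⟩) = ⟨x, hx⟩ := e.symm_apply_apply _
  calc ‖x‖ = ‖(e.symm (e ⟨x, hx⟩) : H₁)‖ := by rw [h1]
    _ ≤ ‖(e.symm : T →L[ℂ] S)‖ * ‖e ⟨x, hx⟩‖ := by
        simpa using (e.symm : T →L[ℂ] S).le_opNorm (e ⟨x, hx⟩)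
    _ = ‖(e.symm : T →L[ℂ] S)‖ * ‖B x‖ := by congr 1

private lemma keylem (S : Submodule ℂ H₁) (T : Submodule ℂ H₂)
    (hS : IsClosed (S : Set H₁)) (hT : IsClosed (T : Set H₂))
    (C : H₁ →L[ℂ] H₂)
    (h1 : ∀ x ∈ Sᗮ, C x = 0)
    (h2 : ∀ y ∈ Tᗮ, adjoint C y = 0)
    (h3 : ∀ x ∈ S, ‖x‖ ≤ ‖C x‖)
    (h4 : ∀ y ∈ T, ‖y‖ ≤ ‖adjoint C y‖) :
    LinearMap.range (C : H₁ →ₗ[ℂ] H₂) = T := by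
  haveI : CompleteSpace S := hS.completeSpace_coe
  haveI : CompleteSpace T := hT.completeSpace_coe
  have hCT : LinearMap.range (C : H₁ →ₗ[ℂ] H₂) ≤ T := by
    rintro _ ⟨u, rfl⟩
    rw [← Submodule.orthogonal_orthogonal T]
    rw [Submodule.mem_orthogonal]
    intro y hy
    have : (inner ℂ (C u) y : ℂ) = 0 := by
      rw [← ContinuousLinearMap.adjoint_inner_right, h2 y hy, inner_zero_right]
    rw [← inner_conj_symm, ContinuousLinearMap.coe_coe, this, map_zero]
  set g : S →L[ℂ] H₂ := C.comp S.subtypeL with hg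
  have hal : AntilipschitzWith 1 g := by
    apply g.antilipschitz_of_bound
    rintro ⟨x, hx⟩
    simpa [hg] using h3 x hx
  have hclosed := closed_range_of_antilipschitz hal
  set D : Submodule ℂ H₂ := LinearMap.range (g : S →ₗ[ℂ] H₂) with hD
  have hDc : IsClosed (D : Set H₂) := by
    have h := congrArg (fun K : Submodule ℂ H₂ => (K : Set H₂)) hclosed
    simp only [Submodule.topologicalClosure_coe] at h
    rw [← h]
    exact isClosed_closure
  haveI : CompleteSpace D := hDc.completeSpace_coe
  have hDC : D ≤ LinearMap.range (C : H₁ →ₗ[ℂ] H₂) := by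
    rintro _ ⟨⟨x, hx⟩, rfl⟩
    exact ⟨x, rfl⟩
  have hTD : T ≤ D := by
    intro y hy
    obtain ⟨d, hd, z, hz, rfl⟩ := D.exists_add_mem_mem_orthogonal y
    have hzT : z ∈ T := by
      have hdT : d ∈ T := hCT (hDC hd)
      have : (d + z) - d ∈ T := T.sub_mem hy hdT
      simpa using this
    have hCz : adjoint C z = 0 := by
      have key : ∀ x : H₁, (inner ℂ (C x) z : ℂ) = 0 := by
        intro x
        obtain ⟨s, hs, s', hs', rfl⟩ := S.exists_add_mem_mem_orthogonal x
        rw [map_add, h1 s' hs', add_zero]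
        have hCs : C s ∈ D := ⟨⟨s, hs⟩, rfl⟩
        exact (Submodule.mem_orthogonal _ _).mp hz (C s) hCs
      have := key (adjoint C z)
      rw [← ContinuousLinearMap.adjoint_inner_right] at this
      · exact inner_self_eq_zero.mp this
    have hz0 : z = 0 := by
      have := h4 z hzT
      rw [hCz, norm_zero] at this
      exact norm_le_zero_iff.mp this
    simpa [hz0] using hd
  exact le_antisymm hCT (le_trans hTD hDC)

private lemma arith {a M N t b c CA : ℝ} (ha0 : 0 ≤ a) (hM0 : 0 ≤ M) (hb0 : 0 ≤ b)
    (ht0 : 0 ≤ t) (ht : t ≤ (M + 1) * b) (hA : c ≤ a * t)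
    (hN : (a + 1) * (M + 1) ≤ N) (hlow : N * b - c ≤ CA) : t ≤ CA := by
  nlinarith [mul_nonneg (sub_nonneg.mpr hN) hb0,
    mul_nonneg (by linarith : (0:ℝ) ≤ a + 1) (by linarith : 0 ≤ (M + 1) * b - t)]

set_option maxHeartbeats 1000000 in
theorem range_add_smul_eventually
    (S : Submodule ℂ H₁) (T : Submodule ℂ H₂)
    (hS : IsClosed (S : Set H₁)) (hT : IsClosed (T : Set H₂))
    (A B : H₁ →L[ℂ] H₂)
    (hA : LinearMap.range (A : H₁ →ₗ[ℂ] H₂) ≤ T) (hA' : LinearMap.range (adjoint A : H₂ →ₗ[ℂ] H₁) ≤ S)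
    (hB : LinearMap.range (B : H₁ →ₗ[ℂ] H₂) = T) (hB' : LinearMap.range (adjoint B : H₂ →ₗ[ℂ] H₁) = S) :
    ∃ n₀ : ℕ, ∀ n : ℕ, n₀ ≤ n →
      LinearMap.range ((A + (n : ℂ) • B : H₁ →L[ℂ] H₂) : H₁ →ₗ[ℂ] H₂) = T ∧
      LinearMap.range ((adjoint (A + (n : ℂ) • B) : H₂ →ₗ[ℂ] H₁)) = S := by
  obtain ⟨k, hk0, hk⟩ := boundedBelow S T hS hT B hB hB'
  obtain ⟨k', hk0', hk'⟩ := boundedBelow T S hT hS (adjoint B)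
    hB' (by rw [adjoint_adjoint]; exact hB)
  set M := max k k' with hM
  set a := max ‖A‖ ‖adjoint A‖ with ha
  have hM0 : 0 ≤ M := le_trans hk0 (le_max_left _ _)
  have ha0 : 0 ≤ a := le_trans (norm_nonneg A) (le_max_left _ _)
  refine ⟨⌈(a + 1) * (M + 1)⌉₊, fun n hn => ?_⟩
  have hnR : (a + 1) * (M + 1) ≤ (n : ℝ) :=
    le_trans (Nat.le_ceil _) (by exact_mod_cast hn)
  set C := A + (n : ℂ) • B with hC
  have hadj : adjoint C = adjoint A + (n : ℂ) • adjoint B := by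
    rw [hC, map_add]
    congr 1
    rw [LinearIsometryEquiv.map_smulₛₗ]
    norm_num
  have hkerB : LinearMap.ker (B : H₁ →ₗ[ℂ] H₂) = Sᗮ := by rw [myker, hB']
  have hkerB' : LinearMap.ker (adjoint B : H₂ →ₗ[ℂ] H₁) = Tᗮ := by rw [myker, adjoint_adjoint, hB]
  have hkerA : Sᗮ ≤ LinearMap.ker (A : H₁ →ₗ[ℂ] H₂) := by rw [myker]; exact Submodule.orthogonal_le hA'
  have hkerA' : Tᗮ ≤ LinearMap.ker (adjoint A : H₂ →ₗ[ℂ] H₁) := by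
    rw [myker, adjoint_adjoint]; exact Submodule.orthogonal_le hA
  have h1 : ∀ x ∈ Sᗮ, C x = 0 := by
    intro x hx
    have hAx : A x = 0 := LinearMap.mem_ker.mp (hkerA hx)
    have hBx : B x = 0 := LinearMap.mem_ker.mp (hkerB ▸ hx)
    simp [hC, hAx, hBx]
  have h2 : ∀ y ∈ Tᗮ, adjoint C y = 0 := by
    intro y hy
    have hAy : adjoint A y = 0 := LinearMap.mem_ker.mp (hkerA' hy)
    have hBy : adjoint B y = 0 := LinearMap.mem_ker.mp (hkerB' ▸ hy)
    simp [hadj, hAy, hBy]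
  have h3 : ∀ x ∈ S, ‖x‖ ≤ ‖C x‖ := by
    intro x hx
    have ht : ‖x‖ ≤ (M + 1) * ‖B x‖ := by
      refine le_trans (hk x hx) ?_
      have : k ≤ M + 1 := le_trans (le_max_left k k') (by linarith)
      nlinarith [norm_nonneg (B x)]
    have hAx : ‖A x‖ ≤ a * ‖x‖ := by
      refine le_trans (A.le_opNorm x) ?_
      have : ‖A‖ ≤ a := le_max_left _ _
      nlinarith [norm_nonneg x]
    have hlow : (n : ℝ) * ‖B x‖ - ‖A x‖ ≤ ‖C x‖ := by
      have h1' : ‖(n : ℂ) • B x‖ ≤ ‖A x + (n : ℂ) • B x‖ + ‖A x‖ := by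
        have := norm_sub_le (A x + (n : ℂ) • B x) (A x)
        simpa using this
      have h2' : ‖(n : ℂ) • B x‖ = (n : ℝ) * ‖B x‖ := by
        rw [norm_smul]; norm_num
      have hCx : C x = A x + (n : ℂ) • B x := by simp [hC]
      rw [hCx]; linarith [h1', h2']
    exact arith ha0 hM0 (norm_nonneg (B x)) (norm_nonneg x) ht hAx hnR hlow
  have h4 : ∀ y ∈ T, ‖y‖ ≤ ‖adjoint C y‖ := by
    intro y hy
    have ht : ‖y‖ ≤ (M + 1) * ‖adjoint B y‖ := by
      refine le_trans (hk' y hy) ?_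
      have : k' ≤ M + 1 := le_trans (le_max_right k k') (by linarith)
      nlinarith [norm_nonneg (adjoint B y)]
    have hAy : ‖adjoint A y‖ ≤ a * ‖y‖ := by
      refine le_trans ((adjoint A).le_opNorm y) ?_
      have : ‖adjoint A‖ ≤ a := le_max_right _ _
      nlinarith [norm_nonneg y]
    have hlow : (n : ℝ) * ‖adjoint B y‖ - ‖adjoint A y‖ ≤ ‖adjoint C y‖ := by
      have h1' : ‖(n : ℂ) • adjoint B y‖ ≤
          ‖adjoint A y + (n : ℂ) • adjoint B y‖ + ‖adjoint A y‖ := by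
        have := norm_sub_le (adjoint A y + (n : ℂ) • adjoint B y) (adjoint A y)
        simpa using this
      have h2' : ‖(n : ℂ) • adjoint B y‖ = (n : ℝ) * ‖adjoint B y‖ := by
        rw [norm_smul]; norm_num
      have hCy : adjoint C y = adjoint A y + (n : ℂ) • adjoint B y := by
        rw [hadj]; simp
      rw [hCy]; linarith [h1', h2']
    exact arith ha0 hM0 (norm_nonneg (adjoint B y)) (norm_nonneg y) ht hAy hnR hlow
  exact ⟨keylem S T hS hT C h1 h2 h3 h4,
    keylem T S hT hS (adjoint C) h2
      (fun x hx => by rw [adjoint_adjoint]; exact h1 x hx) h4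
      (fun x hx => by rw [adjoint_adjoint]; exact h3 x hx)⟩
end
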